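/- arXiv:2212.11241 — 7 statements merged into one kernel-verified Lean document; each statement's English description precedes it below -/
import Mathlib

section
/- Let ε > 0, let a : (0,ε] → (0,∞) be measurable, and let f : (0,ε] → ℝ be continuously differentiable with derivative f′. Then (f(ε) − (1/ε)∫₀^ε f(s) ds)² ≤ ((1/ε)∫₀^ε ∫ₛ^ε a(σ)⁻¹ dσ ds) · (∫₀^ε a(y) f′(y)² dy), provided the integrals on the right-hand side are finite. -/
open MeasureTheory

lemma my_sq_integral_mul_le {α : Type*} [MeasurableSpace α] (μ : Measure α) (u v : α → ℝ)
    (hu : AEStronglyMeasurable u μ) (hv : AEStronglyMeasurable v μ)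
    (hu2 : Integrable (fun x => u x ^ 2) μ) (hv2 : Integrable (fun x => v x ^ 2) μ) :
    (∫ x, u x * v x ∂μ) ^ 2 ≤ (∫ x, u x ^ 2 ∂μ) * (∫ x, v x ^ 2 ∂μ) := by
  have hmu : MemLp u 2 μ := (memLp_two_iff_integrable_sq hu).2 hu2
  have hmv : MemLp v 2 μ := (memLp_two_iff_integrable_sq hv).2 hv2
  have h2 : ENNReal.ofReal (2:ℝ) = 2 := by norm_num
  have hpq : Real.HolderConjugate 2 2 := Real.HolderConjugate.two_two
  have key := integral_mul_norm_le_Lp_mul_Lq (μ := μ) hpq (h2 ▸ hmu) (h2 ▸ hmv)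
  have hA : 0 ≤ ∫ x, u x ^ 2 ∂μ := integral_nonneg fun x => sq_nonneg _
  have hB : 0 ≤ ∫ x, v x ^ 2 ∂μ := integral_nonneg fun x => sq_nonneg _
  have hrw : ∀ w : α → ℝ, (∫ x, ‖w x‖ ^ (2:ℝ) ∂μ) = ∫ x, w x ^ 2 ∂μ := by
    intro w
    refine integral_congr_ae (Filter.Eventually.of_forall fun x => ?_)
    beta_reduce
    rw [show (2:ℝ) = ((2:ℕ):ℝ) by norm_num, Real.rpow_natCast]
    simp [sq_abs]
  rw [hrw, hrw] at key
  have h1 : |∫ x, u x * v x ∂μ| ≤ ∫ x, ‖u x‖ * ‖v x‖ ∂μ := by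
    rw [← Real.norm_eq_abs]
    calc ‖∫ x, u x * v x ∂μ‖ ≤ ∫ x, ‖u x * v x‖ ∂μ := norm_integral_le_integral_norm _
    _ = ∫ x, ‖u x‖ * ‖v x‖ ∂μ := by simp [norm_mul]
  have hnn : 0 ≤ ∫ x, ‖u x‖ * ‖v x‖ ∂μ :=
    integral_nonneg fun x => mul_nonneg (norm_nonneg _) (norm_nonneg _)
  have hhalf : ∀ c : ℝ, 0 ≤ c → (c ^ ((1:ℝ)/2)) ^ 2 = c := by
    intro c hc
    rw [← Real.rpow_natCast (c ^ ((1:ℝ)/2)) 2, ← Real.rpow_mul hc]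
    norm_num
  calc (∫ x, u x * v x ∂μ) ^ 2 = |∫ x, u x * v x ∂μ| ^ 2 := (sq_abs _).symm
    _ ≤ (∫ x, ‖u x‖ * ‖v x‖ ∂μ) ^ 2 := by
        exact pow_le_pow_left₀ (abs_nonneg _) h1 2
    _ ≤ ((∫ x, u x ^ 2 ∂μ) ^ ((1:ℝ)/2) * (∫ x, v x ^ 2 ∂μ) ^ ((1:ℝ)/2)) ^ 2 :=
        pow_le_pow_left₀ hnn key 2
    _ = (∫ x, u x ^ 2 ∂μ) * (∫ x, v x ^ 2 ∂μ) := by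
        rw [mul_pow, hhalf _ hA, hhalf _ hB]

/-- One-dimensional quantitative estimate comparing the endpoint value `f(ε)` with the
boundary-layer average `(1/ε)∫₀^ε f`: the square of the difference is bounded by the
product of the non-degeneracy quantity `(1/ε)∫₀^ε ∫ₛ^ε a(σ)⁻¹ dσ ds` and the weighted
energy `∫₀^ε a |f′|²`. -/
theorem trace_average_sq_estimate
    (ε : ℝ) (hε : 0 < ε) (a f f' : ℝ → ℝ)
    (ha_meas : Measurable a) (ha_pos : ∀ x ∈ Set.Ioc (0 : ℝ) ε, 0 < a x)
    (hf : ∀ x ∈ Set.Ioc (0 : ℝ) ε, HasDerivAt f (f' x) x)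
    (hf'c : ContinuousOn f' (Set.Ioc 0 ε))
    (hinner : ∀ s ∈ Set.Ioc (0 : ℝ) ε, IntegrableOn (fun σ => (a σ)⁻¹) (Set.Ioc s ε))
    (houter : IntegrableOn (fun s => ∫ σ in Set.Ioc s ε, (a σ)⁻¹) (Set.Ioc 0 ε))
    (henergy : IntegrableOn (fun y => a y * (f' y) ^ 2) (Set.Ioc 0 ε)) :
    (f ε - (1/ε) * ∫ s in Set.Ioc (0 : ℝ) ε, f s) ^ 2 ≤
      ((1/ε) * ∫ s in Set.Ioc (0 : ℝ) ε, ∫ σ in Set.Ioc s ε, (a σ)⁻¹) *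
        (∫ y in Set.Ioc (0 : ℝ) ε, a y * (f' y) ^ 2) := by
  set E : ℝ := ∫ y in Set.Ioc (0 : ℝ) ε, a y * (f' y) ^ 2 with hE_def
  set g : ℝ → ℝ := fun s => ∫ σ in Set.Ioc s ε, (a σ)⁻¹ with hg_def
  set G : ℝ := ∫ s in Set.Ioc (0 : ℝ) ε, g s with hG_def
  have hεne : ε ≠ 0 := hε.ne'
  have hfc : ContinuousOn f (Set.Ioc 0 ε) := fun x hx => (hf x hx).continuousAt.continuousWithinAt
  have hE0 : 0 ≤ E := setIntegral_nonneg measurableSet_Ioc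
    fun y hy => mul_nonneg (ha_pos y hy).le (sq_nonneg _)
  -- Step A
  have stepA : ∀ s ∈ Set.Ioc (0:ℝ) ε, (f ε - f s) ^ 2 ≤ g s * E := by
    intro s hs
    have subset1 : Set.Icc s ε ⊆ Set.Ioc 0 ε := fun x hx => ⟨lt_of_lt_of_le hs.1 hx.1, hx.2⟩
    have subset2 : Set.Ioc s ε ⊆ Set.Ioc 0 ε := Set.Ioc_subset_Ioc_left hs.1.le
    have hderiv : ∀ x ∈ Set.uIcc s ε, HasDerivAt f (f' x) x := by
      rw [Set.uIcc_of_le hs.2]; exact fun x hx => hf x (subset1 hx)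
    have hint : IntervalIntegrable f' volume s ε := by
      apply ContinuousOn.intervalIntegrable
      rw [Set.uIcc_of_le hs.2]
      exact hf'c.mono subset1
    have heq : f ε - f s = ∫ x in Set.Ioc s ε, f' x := by
      rw [← intervalIntegral.integral_of_le hs.2,
        intervalIntegral.integral_eq_sub_of_hasDerivAt hderiv hint]
    set μ := volume.restrict (Set.Ioc s ε) with hμ_def
    have hae : ∀ᵐ x ∂μ, x ∈ Set.Ioc s ε := ae_restrict_mem measurableSet_Ioc
    set u : ℝ → ℝ := fun σ => Real.sqrt ((a σ)⁻¹) with hu_def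
    set v : ℝ → ℝ := fun σ => Real.sqrt (a σ) * f' σ with hv_def
    have hum : AEStronglyMeasurable u μ :=
      (Real.continuous_sqrt.measurable.comp ha_meas.inv).aestronglyMeasurable
    have hf'm : AEStronglyMeasurable f' μ :=
      (hf'c.aestronglyMeasurable measurableSet_Ioc).mono_measure
        (Measure.restrict_mono subset2 le_rfl)
    have hvm : AEStronglyMeasurable v μ :=
      ((Real.continuous_sqrt.measurable.comp ha_meas).aestronglyMeasurable).mul hf'm
    have hu2 : Integrable (fun x => u x ^ 2) μ := by
      refine (hinner s hs).congr ?_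
      filter_upwards [hae] with x hx
      rw [hu_def]
      beta_reduce
      rw [Real.sq_sqrt (inv_nonneg.2 (ha_pos x (subset2 hx)).le)]
    have hv2 : Integrable (fun x => v x ^ 2) μ := by
      refine (henergy.mono_set subset2).congr ?_
      filter_upwards [hae] with x hx
      rw [hv_def]
      beta_reduce
      rw [mul_pow, Real.sq_sqrt (ha_pos x (subset2 hx)).le]
    have huv : ∫ x, u x * v x ∂μ = ∫ x, f' x ∂μ := by
      refine integral_congr_ae ?_
      filter_upwards [hae] with x hx
      have hax : 0 < a x := ha_pos x (subset2 hx)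
      have hs0 : Real.sqrt (a x) ≠ 0 := (Real.sqrt_pos.2 hax).ne'
      rw [hu_def, hv_def]
      beta_reduce
      rw [Real.sqrt_inv]
      field_simp
    have hInt_u2 : ∫ x, u x ^ 2 ∂μ = g s := by
      refine integral_congr_ae ?_
      filter_upwards [hae] with x hx
      rw [hu_def]
      beta_reduce
      rw [Real.sq_sqrt (inv_nonneg.2 (ha_pos x (subset2 hx)).le)]
    have hInt_v2 : ∫ x, v x ^ 2 ∂μ = ∫ x in Set.Ioc s ε, a x * (f' x) ^ 2 := by
      refine integral_congr_ae ?_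
      filter_upwards [hae] with x hx
      rw [hv_def]
      beta_reduce
      rw [mul_pow, Real.sq_sqrt (ha_pos x (subset2 hx)).le]
    have hg0 : 0 ≤ g s := setIntegral_nonneg measurableSet_Ioc
      fun σ hσ => inv_nonneg.2 (ha_pos σ (subset2 hσ)).le
    have hmono : ∫ x in Set.Ioc s ε, a x * (f' x) ^ 2 ≤ E := by
      refine setIntegral_mono_set henergy ?_ (HasSubset.Subset.eventuallyLE subset2)
      refine (ae_restrict_iff' measurableSet_Ioc).2 (Filter.Eventually.of_forall fun y hy => ?_)
      exact mul_nonneg (ha_pos y hy).le (sq_nonneg _)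
    calc (f ε - f s) ^ 2 = (∫ x, u x * v x ∂μ) ^ 2 := by rw [heq, huv]
      _ ≤ (∫ x, u x ^ 2 ∂μ) * (∫ x, v x ^ 2 ∂μ) :=
          my_sq_integral_mul_le μ u v hum hvm hu2 hv2
      _ = g s * (∫ x in Set.Ioc s ε, a x * (f' x) ^ 2) := by rw [hInt_u2, hInt_v2]
      _ ≤ g s * E := mul_le_mul_of_nonneg_left hmono hg0
  -- Step B : integrability of h and f
  set μ0 := volume.restrict (Set.Ioc (0:ℝ) ε) with hμ0_def
  haveI : IsFiniteMeasure μ0 := by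
    constructor
    rw [hμ0_def, Measure.restrict_apply_univ, Real.volume_Ioc]
    exact ENNReal.ofReal_lt_top
  set h : ℝ → ℝ := fun s => f ε - f s with hh_def
  have hae0 : ∀ᵐ s ∂μ0, s ∈ Set.Ioc (0:ℝ) ε := ae_restrict_mem measurableSet_Ioc
  have hhm : AEStronglyMeasurable h μ0 :=
    (continuousOn_const.sub hfc).aestronglyMeasurable measurableSet_Ioc
  have hGE_int : Integrable (fun s => g s * E) μ0 := houter.mul_const E
  have hh2m : AEStronglyMeasurable (fun s => h s ^ 2) μ0 := by
    have hmm := hhm.mul hhm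
    rw [show (fun s => h s ^ 2) = h * h from funext fun s => sq (h s)]
    exact hmm
  have hh2 : Integrable (fun s => h s ^ 2) μ0 := by
    refine Integrable.mono' hGE_int hh2m ?_
    filter_upwards [hae0] with s hs
    rw [Real.norm_eq_abs, abs_of_nonneg (sq_nonneg _)]
    exact stepA s hs
  have hh1 : Integrable h μ0 := ((memLp_two_iff_integrable_sq hhm).2 hh2).integrable one_le_two
  
  have hf_int : Integrable f μ0 := by
    have : Integrable (fun s => f ε - h s) μ0 := (integrable_const (f ε)).sub hh1
    simp [hh_def] at this; exact this
  -- integral identities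
  have hconst : ∫ _ : ℝ, (1:ℝ) ∂μ0 = ε := by
    rw [hμ0_def]
    simp [Real.volume_Ioc, ENNReal.toReal_ofReal hε.le, hε.le]
  have hsum : ∫ s, h s ∂μ0 = ε * f ε - ∫ s, f s ∂μ0 := by
    rw [hh_def]
    rw [integral_sub (integrable_const _) hf_int, integral_const]
    rw [hμ0_def]
    simp [Real.volume_Ioc, ENNReal.toReal_ofReal hε.le, hε.le]
  -- Step C : outer Cauchy-Schwarz
  have one2 : Integrable (fun _ : ℝ => (1:ℝ) ^ 2) μ0 := by simpa using integrable_const (1:ℝ)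
  have hCS := my_sq_integral_mul_le μ0 (fun _ => (1:ℝ)) h aestronglyMeasurable_const hhm one2 hh2
  simp only [one_mul, one_pow] at hCS
  rw [hconst] at hCS
  have hh2_le : ∫ s, h s ^ 2 ∂μ0 ≤ G * E := by
    have : ∫ s, g s * E ∂μ0 = G * E := integral_mul_const E g
    rw [← this]
    refine integral_mono_ae hh2 hGE_int ?_
    filter_upwards [hae0] with s hs
    exact stepA s hs
  have hchain : (∫ s, h s ∂μ0) ^ 2 ≤ ε * (G * E) :=
    le_trans hCS (mul_le_mul_of_nonneg_left hh2_le hε.le)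
  have hLHS : f ε - (1/ε) * ∫ s in Set.Ioc (0 : ℝ) ε, f s = (1/ε) * ∫ s, h s ∂μ0 := by
    rw [hsum]
    field_simp
    ring
  calc (f ε - (1/ε) * ∫ s in Set.Ioc (0 : ℝ) ε, f s) ^ 2
      = (1/ε)^2 * (∫ s, h s ∂μ0) ^ 2 := by rw [hLHS, mul_pow]
    _ ≤ (1/ε)^2 * (ε * (G * E)) := mul_le_mul_of_nonneg_left hchain (by positivity)
    _ = ((1/ε) * G) * E := by field_simp
end

section
/- Let ε > 0, let a : (0,ε] → (0,∞) be measurable, and let f : (0,ε] → ℝ be continuously differentiable with derivative f′. Then |f(ε) − (1/ε)∫₀^ε f(s) ds| ≤ (1/ε)∫₀^ε (∫ₛ^ε a(σ)⁻¹ dσ)^{1/2} (∫ₛ^ε a(σ) f′(σ)² dσ)^{1/2} ds, provided the integrals on the right-hand side are finite. -/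
open MeasureTheory

/-- One-dimensional quantitative estimate comparing the endpoint value `f(ε)` with the
boundary-layer average `(1/ε)∫₀^ε f` in the `L¹` form: the difference is bounded by
`(1/ε)∫₀^ε (∫ₛ^ε a⁻¹)^{1/2} (∫ₛ^ε a|f′|²)^{1/2} ds`. -/
theorem trace_average_abs_estimate
    (ε : ℝ) (hε : 0 < ε) (a f f' : ℝ → ℝ)
    (ha_meas : Measurable a) (ha_pos : ∀ x ∈ Set.Ioc (0 : ℝ) ε, 0 < a x)
    (hf : ∀ x ∈ Set.Ioc (0 : ℝ) ε, HasDerivAt f (f' x) x)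
    (hf'c : ContinuousOn f' (Set.Ioc 0 ε))
    (hinner : ∀ s ∈ Set.Ioc (0 : ℝ) ε, IntegrableOn (fun σ => (a σ)⁻¹) (Set.Ioc s ε))
    (henergy : IntegrableOn (fun σ => a σ * (f' σ) ^ 2) (Set.Ioc 0 ε))
    (houter : IntegrableOn
      (fun s => Real.sqrt (∫ σ in Set.Ioc s ε, (a σ)⁻¹) *
        Real.sqrt (∫ σ in Set.Ioc s ε, a σ * (f' σ) ^ 2)) (Set.Ioc 0 ε)) :
    |f ε - (1/ε) * ∫ s in Set.Ioc (0 : ℝ) ε, f s| ≤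
      (1/ε) * ∫ s in Set.Ioc (0 : ℝ) ε,
        Real.sqrt (∫ σ in Set.Ioc s ε, (a σ)⁻¹) *
          Real.sqrt (∫ σ in Set.Ioc s ε, a σ * (f' σ) ^ 2) := by
  set g : ℝ → ℝ := fun s => Real.sqrt (∫ σ in Set.Ioc s ε, (a σ)⁻¹) *
      Real.sqrt (∫ σ in Set.Ioc s ε, a σ * (f' σ) ^ 2) with hg_def
  -- Step A: pointwise estimate |f ε - f s| ≤ g s for s ∈ (0, ε]
  have key : ∀ s ∈ Set.Ioc (0 : ℝ) ε, |f ε - f s| ≤ g s := by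
    intro s hs
    obtain ⟨hs0, hsε⟩ := hs
    have hsub : Set.uIcc s ε ⊆ Set.Ioc 0 ε := by
      rw [Set.uIcc_of_le hsε]
      exact fun x hx => ⟨lt_of_lt_of_le hs0 hx.1, hx.2⟩
    have hsub' : Set.Ioc s ε ⊆ Set.Ioc 0 ε :=
      fun x hx => ⟨lt_trans hs0 hx.1, hx.2⟩
    have hint : IntervalIntegrable f' volume s ε :=
      (hf'c.mono hsub).intervalIntegrable
    have heq : f ε - f s = ∫ σ in Set.Ioc s ε, f' σ := by
      rw [← intervalIntegral.integral_of_le hsε]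
      exact (intervalIntegral.integral_eq_sub_of_hasDerivAt
        (fun x hx => hf x (hsub hx)) hint).symm
    rw [heq]
    set μ := volume.restrict (Set.Ioc s ε) with hμ
    -- measurability facts
    have hF_meas : AEStronglyMeasurable (fun σ => Real.sqrt (a σ)⁻¹) μ :=
      (measurable_id.sqrt.comp ha_meas.inv).aestronglyMeasurable
    have hf'_meas : AEStronglyMeasurable f' μ :=
      (hf'c.mono hsub').aestronglyMeasurable measurableSet_Ioc
    have hG_meas : AEStronglyMeasurable (fun σ => Real.sqrt (a σ) * |f' σ|) μ :=
      ((measurable_id.sqrt.comp ha_meas).aestronglyMeasurable).mul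
        (((hf'c.mono hsub').abs).aestronglyMeasurable measurableSet_Ioc)
    have hae : ∀ᵐ σ ∂μ, σ ∈ Set.Ioc s ε :=
      ae_restrict_mem measurableSet_Ioc
    -- Memℒp conditions
    have hF : MemLp (fun σ => Real.sqrt (a σ)⁻¹) (ENNReal.ofReal 2) μ := by
      rw [show ENNReal.ofReal 2 = 2 by norm_num]
      rw [memLp_two_iff_integrable_sq hF_meas]
      refine (hinner s ⟨hs0, hsε⟩).congr ?_
      filter_upwards [hae] with σ hσ
      rw [Real.sq_sqrt (inv_nonneg.mpr (ha_pos σ (hsub' hσ)).le)]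
    have hG : MemLp (fun σ => Real.sqrt (a σ) * |f' σ|) (ENNReal.ofReal 2) μ := by
      rw [show ENNReal.ofReal 2 = 2 by norm_num]
      rw [memLp_two_iff_integrable_sq hG_meas]
      refine (henergy.mono_set hsub').congr ?_
      filter_upwards [hae] with σ hσ
      rw [mul_pow, Real.sq_sqrt (ha_pos σ (hsub' hσ)).le, sq_abs]
    have hCS := integral_mul_le_Lp_mul_Lq_of_nonneg
      Real.HolderConjugate.two_two
      (Filter.Eventually.of_forall fun σ => Real.sqrt_nonneg _)
      (Filter.Eventually.of_forall fun σ => mul_nonneg (Real.sqrt_nonneg _) (abs_nonneg _))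
      hF hG
    calc |∫ σ in Set.Ioc s ε, f' σ| ≤ ∫ σ in Set.Ioc s ε, |f' σ| := by
          simpa [Real.norm_eq_abs] using norm_integral_le_integral_norm (μ := μ) f'
      _ = ∫ σ, Real.sqrt (a σ)⁻¹ * (Real.sqrt (a σ) * |f' σ|) ∂μ := by
          refine (setIntegral_congr_fun measurableSet_Ioc fun σ hσ => ?_).symm
          have haσ := ha_pos σ (hsub' hσ)
          rw [← mul_assoc, ← Real.sqrt_mul (inv_nonneg.mpr haσ.le),
            inv_mul_cancel₀ haσ.ne', Real.sqrt_one, one_mul]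
      _ ≤ (∫ σ, Real.sqrt (a σ)⁻¹ ^ (2:ℝ) ∂μ) ^ (1/(2:ℝ)) *
            (∫ σ, (Real.sqrt (a σ) * |f' σ|) ^ (2:ℝ) ∂μ) ^ (1/(2:ℝ)) := hCS
      _ = g s := by
          have h2 : ∀ x : ℝ, x ^ (2:ℝ) = x ^ 2 := fun x => by
            rw [show (2:ℝ) = ((2:ℕ):ℝ) by norm_num, Real.rpow_natCast]
          have e1 : (∫ σ, Real.sqrt (a σ)⁻¹ ^ (2:ℝ) ∂μ) = ∫ σ in Set.Ioc s ε, (a σ)⁻¹ := by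
            refine setIntegral_congr_fun measurableSet_Ioc fun σ hσ => ?_
            rw [h2, Real.sq_sqrt (inv_nonneg.mpr (ha_pos σ (hsub' hσ)).le)]
          have e2 : (∫ σ, (Real.sqrt (a σ) * |f' σ|) ^ (2:ℝ) ∂μ)
              = ∫ σ in Set.Ioc s ε, a σ * (f' σ) ^ 2 := by
            refine setIntegral_congr_fun measurableSet_Ioc fun σ hσ => ?_
            rw [h2, mul_pow, Real.sq_sqrt (ha_pos σ (hsub' hσ)).le, sq_abs]
          rw [e1, e2, ← Real.sqrt_eq_rpow, ← Real.sqrt_eq_rpow]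
  -- f is continuous on (0, ε], hence a.e. strongly measurable on it
  have hf_cont : ContinuousOn f (Set.Ioc 0 ε) :=
    fun x hx => (hf x hx).continuousAt.continuousWithinAt
  have hf_meas : AEStronglyMeasurable f (volume.restrict (Set.Ioc (0:ℝ) ε)) :=
    hf_cont.aestronglyMeasurable measurableSet_Ioc
  have hae0 : ∀ᵐ s ∂(volume.restrict (Set.Ioc (0:ℝ) ε)), s ∈ Set.Ioc (0:ℝ) ε :=
    ae_restrict_mem measurableSet_Ioc
  -- Step B: f is integrable on (0, ε]
  have hfint : IntegrableOn f (Set.Ioc (0:ℝ) ε) := by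
    refine Integrable.mono' ((integrable_const (|f ε|)).add houter) hf_meas ?_
    filter_upwards [hae0] with s hs
    have := key s hs
    have : |f s| ≤ |f ε| + g s := by
      have h1 : |f s| - |f ε| ≤ |f ε - f s| := by
        rw [abs_sub_comm]; exact abs_sub_abs_le_abs_sub _ _
      linarith
    simpa using this
  have hdiff_int : IntegrableOn (fun s => f ε - f s) (Set.Ioc (0:ℝ) ε) :=
    (integrable_const (f ε)).sub hfint
  -- Step C: rewrite the difference as an average of (f ε - f s)
  have hvol : (volume (Set.Ioc (0:ℝ) ε)).toReal = ε := by
    rw [Real.volume_Ioc]; simp [hε.le]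
  have hrw : f ε - (1/ε) * ∫ s in Set.Ioc (0:ℝ) ε, f s
      = (1/ε) * ∫ s in Set.Ioc (0:ℝ) ε, (f ε - f s) := by
    rw [integral_sub (integrable_const (f ε)) hfint]
    rw [setIntegral_const, measureReal_def, hvol]
    field_simp
    ring
  rw [hrw, abs_mul, abs_of_pos (by positivity : (0:ℝ) < 1/ε)]
  have hmono : |∫ s in Set.Ioc (0:ℝ) ε, (f ε - f s)| ≤ ∫ s in Set.Ioc (0:ℝ) ε, g s := by
    refine le_trans (by
      simpa [Real.norm_eq_abs] using
        norm_integral_le_integral_norm (μ := volume.restrict (Set.Ioc (0:ℝ) ε))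
          (fun s => f ε - f s)) ?_
    refine setIntegral_mono_on hdiff_int.abs houter measurableSet_Ioc ?_
    exact fun s hs => key s hs
  exact mul_le_mul_of_nonneg_left hmono (by positivity)
end

section
/- Let N ≥ 2 and let Ω = 𝕋^{N−1} × (0,1), where 𝕋^{N−1} = ℝ^{N−1}/ℤ^{N−1} is the flat torus with its Haar (Lebesgue) measure; write points of Ω as x = (x′, x_N). For each ε ∈ (0,1/2) let a_ε : (0,1) → (0,∞) be measurable, and suppose that (1/ε)∫₀^ε ∫ₛ^ε a_ε(σ)⁻¹ dσ ds → 0 as ε → 0⁺. Let M < ∞ and for each ε ∈ (0,1/2) let u^ε : 𝕋^{N−1} × (0,1) → ℝ be continuously differentiable with ∫_Ω a_ε(x_N) |∇u^ε(x)|² dx ≤ 2M for all ε. Then ∫_{𝕋^{N−1}} ( u^ε(x′, ε) − (1/ε)∫₀^ε u^ε(x′, s) ds )² dx′ → 0 as ε → 0⁺. -/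
open MeasureTheory
open scoped ENNReal
noncomputable section

/-- Fundamental domain `[0,1)^n` of the flat torus `𝕋^n = ℝ^n/ℤ^n`. -/
def unitBox (n : ℕ) : Set (Fin n → ℝ) := Set.univ.pi fun _ => Set.Ico (0:ℝ) 1

/-- The flat cylinder `Ω = 𝕋^n × (0,1)`, realized as the fundamental domain
`[0,1)^n × (0,1)` inside `ℝ^n × ℝ`. -/
def cyl (n : ℕ) : Set ((Fin n → ℝ) × ℝ) := (unitBox n) ×ˢ Set.Ioo (0:ℝ) 1

/-- The `i`-th coordinate direction in `ℝ^n × ℝ`: for `i < n` the horizontal unit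
vector `(e_i, 0)`, and for `i = n` the vertical unit vector `(0, 1)`. -/
def dirVec (n : ℕ) (i : Fin (n + 1)) : (Fin n → ℝ) × ℝ :=
  Fin.lastCases ((0 : Fin n → ℝ), (1 : ℝ)) (fun j => (Pi.single j (1:ℝ), (0:ℝ))) i

lemma sqrtSq (x : ℝ≥0∞) : (x ^ (1/2:ℝ)) ^ 2 = x := by
  rw [← ENNReal.rpow_natCast (x ^ (1/2:ℝ)) 2, ← ENNReal.rpow_mul]
  norm_num

lemma holderHalf {α : Type*} [MeasurableSpace α] (μ : Measure α) (f g : α → ℝ≥0∞)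
    (hf : AEMeasurable f μ) (hg : AEMeasurable g μ) :
    ∫⁻ x, f x * g x ∂μ ≤ (∫⁻ x, (f x)^2 ∂μ) ^ (1/2:ℝ) * (∫⁻ x, (g x)^2 ∂μ) ^ (1/2:ℝ) := by
  have hpq : Real.HolderConjugate 2 2 := Real.holderConjugate_iff.2 ⟨one_lt_two, by norm_num⟩
  have h := ENNReal.lintegral_mul_le_Lp_mul_Lq μ hpq hf hg
  have h2 : ∀ x : ℝ≥0∞, x ^ (2:ℝ) = x ^ 2 := fun x => by
    rw [← ENNReal.rpow_natCast x 2]; norm_num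
  simpa [Pi.mul_apply, h2] using h

lemma myCS {α : Type*} [MeasurableSpace α] (μ : Measure α) (f g : α → ℝ≥0∞)
    (hf : AEMeasurable f μ) (hg : AEMeasurable g μ) :
    (∫⁻ a, f a * g a ∂μ) ^ 2 ≤ (∫⁻ a, (f a) ^ 2 ∂μ) * (∫⁻ a, (g a) ^ 2 ∂μ) := by
  calc (∫⁻ a, f a * g a ∂μ) ^ 2
      ≤ ((∫⁻ a, (f a) ^ 2 ∂μ) ^ (1/2:ℝ) * (∫⁻ a, (g a) ^ 2 ∂μ) ^ (1/2:ℝ)) ^ 2 :=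
        pow_le_pow_left' (holderHalf μ f g hf hg) 2
    _ = (∫⁻ a, (f a) ^ 2 ∂μ) * (∫⁻ a, (g a) ^ 2 ∂μ) := by
        rw [mul_pow, sqrtSq, sqrtSq]

lemma ofRealAbsIntegralLe {α : Type*} [MeasurableSpace α] (μ : Measure α) (f : α → ℝ) :
    ENNReal.ofReal |∫ x, f x ∂μ| ≤ ∫⁻ x, ENNReal.ofReal |f x| ∂μ := by
  simpa [← ofReal_norm, Real.norm_eq_abs] using
    enorm_integral_le_lintegral_enorm (μ := μ) f

/-- For a family of weights `a_ε` on `(0,1)` satisfying the non-degeneracy condition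
`(1/ε)∫₀^ε ∫ₛ^ε a_ε(σ)⁻¹ dσ ds → 0` (exponent `p = 1`), and a family `u^ε` of `C¹`
functions on the cylinder `Ω = 𝕋^n × (0,1)` (periodic in the torus directions), lying in
`L²(Ω)` and with uniformly bounded weighted energies `∫_Ω a_ε|∇u^ε|² ≤ 2M`, the traces
at height `ε` and the boundary-layer averages are asymptotically equal in `L²(𝕋^n)`:
`∫_{𝕋ⁿ} (u^ε(x′,ε) − (1/ε)∫₀^ε u^ε(x′,s) ds)² dx′ → 0` as `ε → 0⁺`. -/
theorem trace_eq_average_limit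
    (n : ℕ) (hn : 1 ≤ n) (M : ℝ)
    (a : ℝ → ℝ → ℝ)
    (ha_meas : ∀ ε ∈ Set.Ioo (0:ℝ) (1/2), Measurable (a ε))
    (ha_pos : ∀ ε ∈ Set.Ioo (0:ℝ) (1/2), ∀ x ∈ Set.Ioo (0:ℝ) 1, 0 < a ε x)
    (ha_nd : Filter.Tendsto
      (fun ε => (ENNReal.ofReal ε)⁻¹ *
        ∫⁻ s in Set.Ioc (0:ℝ) ε, ∫⁻ σ in Set.Ioc s ε, (ENNReal.ofReal (a ε σ))⁻¹)
      (nhdsWithin 0 (Set.Ioo 0 (1/2))) (nhds 0))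
    (u : ℝ → ((Fin n → ℝ) × ℝ) → ℝ)
    (hu_smooth : ∀ ε ∈ Set.Ioo (0:ℝ) (1/2),
      ContDiffOn ℝ 1 (u ε) {p : (Fin n → ℝ) × ℝ | p.2 ∈ Set.Ioo (0:ℝ) 1})
    (hu_per : ∀ ε ∈ Set.Ioo (0:ℝ) (1/2),
      ∀ (p : (Fin n → ℝ) × ℝ) (i : Fin n), u ε (p.1 + Pi.single i 1, p.2) = u ε p)
    (hu_L2 : ∀ ε ∈ Set.Ioo (0:ℝ) (1/2),
      ∫⁻ p in cyl n, ENNReal.ofReal ((u ε p) ^ 2) < ⊤)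
    (hu_energy : ∀ ε ∈ Set.Ioo (0:ℝ) (1/2),
      ∫⁻ p in cyl n,
          ENNReal.ofReal (a ε p.2 * ∑ i : Fin (n+1), (fderiv ℝ (u ε) p (dirVec n i)) ^ 2)
        ≤ ENNReal.ofReal (2 * M)) :
    Filter.Tendsto
      (fun ε => ∫⁻ x' in unitBox n,
        ENNReal.ofReal ((u ε (x', ε) - (1/ε) * ∫ s in Set.Ioc (0:ℝ) ε, u ε (x', s)) ^ 2))
      (nhdsWithin 0 (Set.Ioo 0 (1/2))) (nhds 0) := by
  classical
  set φ : ℝ → ℝ≥0∞ := fun ε => (ENNReal.ofReal ε)⁻¹ *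
      ∫⁻ s in Set.Ioc (0:ℝ) ε, ∫⁻ σ in Set.Ioc s ε, (ENNReal.ofReal (a ε σ))⁻¹ with hφdef
  have key : ∀ ε ∈ Set.Ioo (0:ℝ) (1/2), φ ε ≠ ⊤ →
      (∫⁻ x' in unitBox n,
        ENNReal.ofReal ((u ε (x', ε) - (1/ε) * ∫ s in Set.Ioc (0:ℝ) ε, u ε (x', s)) ^ 2))
        ≤ φ ε * ENNReal.ofReal (2*M) := by
    intro ε hε hφε
    obtain ⟨hε0, hεhalf⟩ := hε
    have hε1 : ε < 1 := hεhalf.trans (by norm_num)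
    have hεT : ENNReal.ofReal ε ≠ ⊤ := ENNReal.ofReal_ne_top
    have hε0' : ENNReal.ofReal ε ≠ 0 := by
      simp [ENNReal.ofReal_eq_zero, not_le, hε0]
    set v := dirVec n (Fin.last n) with hv
    set g : ((Fin n → ℝ) × ℝ) → ℝ := fun p => fderiv ℝ (u ε) p v with hg
    have hgmeas : Measurable g := measurable_fderiv_apply_const ℝ (u ε) v
    set S : Set ((Fin n → ℝ) × ℝ) := {p | p.2 ∈ Set.Ioo (0:ℝ) 1} with hS
    have hSopen : IsOpen S := isOpen_Ioo.preimage continuous_snd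
    have hgcont : ContinuousOn g S := by
      have h0 := (hu_smooth ε ⟨hε0, hεhalf⟩).continuousOn_fderiv_of_isOpen hSopen le_rfl
      exact (ContinuousLinearMap.apply ℝ ℝ v).continuous.comp_continuousOn h0
    set X : ℝ → ℝ≥0∞ := fun s => ∫⁻ σ in Set.Ioc s ε, (ENNReal.ofReal (a ε σ))⁻¹ with hX
    have hXanti : Antitone X := fun s t hst =>
      lintegral_mono' (Measure.restrict_mono (Set.Ioc_subset_Ioc_left hst) le_rfl) le_rfl
    have hXmeas : Measurable X := hXanti.measurable
    have hφeq : φ ε = (ENNReal.ofReal ε)⁻¹ * ∫⁻ s in Set.Ioc (0:ℝ) ε, X s := rfl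
    have hXsum : (∫⁻ s in Set.Ioc (0:ℝ) ε, X s) ≠ ⊤ := by
      intro h
      exact hφε (by rw [hφeq, h, ENNReal.mul_top (ENNReal.inv_ne_zero.2 hεT)])
    set G : (Fin n → ℝ) → ℝ≥0∞ :=
      fun x' => ∫⁻ σ in Set.Ioo (0:ℝ) 1, ENNReal.ofReal (a ε σ * (g (x', σ))^2) with hG
    have hFmeas : Measurable fun p : (Fin n → ℝ) × ℝ => ENNReal.ofReal (a ε p.2 * (g p)^2) :=
      ENNReal.measurable_ofReal.comp
        (((ha_meas ε ⟨hε0, hεhalf⟩).comp measurable_snd).mul (hgmeas.pow_const 2))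
    have hGmeas : Measurable G :=
      Measurable.lintegral_prod_right' (ν := volume.restrict (Set.Ioo (0:ℝ) 1)) hFmeas
    have hcylmeas : MeasurableSet (cyl n) :=
      (MeasurableSet.univ_pi fun _ => measurableSet_Ico).prod measurableSet_Ioo
    have hGle : ∫⁻ x' in unitBox n, G x' ≤ ENNReal.ofReal (2*M) := by
      have hfub : ∫⁻ x' in unitBox n, G x'
          = ∫⁻ p in cyl n, ENNReal.ofReal (a ε p.2 * (g p)^2) := by
        calc ∫⁻ x' in unitBox n, G x'
            = ∫⁻ p, ENNReal.ofReal (a ε p.2 * (g p)^2)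
                ∂((volume.restrict (unitBox n)).prod (volume.restrict (Set.Ioo (0:ℝ) 1))) :=
              (MeasureTheory.lintegral_prod _ hFmeas.aemeasurable).symm
          _ = ∫⁻ p in cyl n, ENNReal.ofReal (a ε p.2 * (g p)^2) := by
              rw [Measure.prod_restrict, ← Measure.volume_eq_prod]; rfl
      rw [hfub]
      refine le_trans (lintegral_mono_ae ?_) (hu_energy ε ⟨hε0, hεhalf⟩)
      refine (ae_restrict_iff' hcylmeas).2 (Filter.Eventually.of_forall ?_)
      intro p hp
      apply ENNReal.ofReal_le_ofReal
      have hap : 0 < a ε p.2 := ha_pos ε ⟨hε0, hεhalf⟩ p.2 hp.2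
      refine mul_le_mul_of_nonneg_left ?_ hap.le
      exact Finset.single_le_sum (f := fun i => (fderiv ℝ (u ε) p (dirVec n i))^2)
        (fun i _ => sq_nonneg _) (Finset.mem_univ (Fin.last n))
    have haeG : ∀ᵐ x' ∂(volume.restrict (unitBox n)), G x' < ⊤ :=
      ae_lt_top hGmeas (lt_of_le_of_lt hGle ENNReal.ofReal_lt_top).ne
    have pointwise : ∀ x' : Fin n → ℝ, G x' < ⊤ →
        ENNReal.ofReal ((u ε (x', ε) - (1/ε) * ∫ s in Set.Ioc (0:ℝ) ε, u ε (x', s)) ^ 2)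
          ≤ φ ε * G x' := by
      intro x' hGx
      set f : ℝ → ℝ := fun t => u ε (x', t) with hf
      have hline : Continuous fun t : ℝ => ((x', t) : (Fin n → ℝ) × ℝ) :=
        continuous_const.prodMk continuous_id
      have hmapsto : ∀ t ∈ Set.Ioo (0:ℝ) 1, ((x', t) : (Fin n → ℝ) × ℝ) ∈ S := fun t ht => ht
      have hder : ∀ t ∈ Set.Ioo (0:ℝ) 1, HasDerivAt f (g (x', t)) t := by
        intro t ht
        have hd : DifferentiableAt ℝ (u ε) (x', t) :=
          ((hu_smooth ε ⟨hε0, hεhalf⟩).contDiffAt (hSopen.mem_nhds ht)).differentiableAt one_ne_zero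
        have hl : HasDerivAt (fun t : ℝ => ((x', t) : (Fin n → ℝ) × ℝ))
            ((0 : Fin n → ℝ), (1:ℝ)) t := (hasDerivAt_const t x').prodMk (hasDerivAt_id t)
        have hcomp := hd.hasFDerivAt.comp_hasDerivAt t hl
        have hvv : v = ((0 : Fin n → ℝ), (1:ℝ)) := by simp [hv, dirVec]
        rw [hg, hvv]; exact hcomp
      have hgv : ContinuousOn (fun σ => g (x', σ)) (Set.Ioo (0:ℝ) 1) :=
        hgcont.comp hline.continuousOn hmapsto
      have hFTC : ∀ s ∈ Set.Ioc (0:ℝ) ε, f ε - f s = ∫ σ in Set.Ioc s ε, g (x', σ) := by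
        intro s hs
        have hsub : Set.uIcc s ε ⊆ Set.Ioo (0:ℝ) 1 := by
          rw [Set.uIcc_of_le hs.2]
          exact fun t ht => ⟨lt_of_lt_of_le hs.1 ht.1, lt_of_le_of_lt ht.2 hε1⟩
        have hint : IntervalIntegrable (fun σ => g (x', σ)) volume s ε :=
          (hgv.mono hsub).intervalIntegrable
        have h := intervalIntegral.integral_eq_sub_of_hasDerivAt
          (fun t ht => hder t (hsub ht)) hint
        rw [← intervalIntegral.integral_of_le hs.2, h]
      have hgvmeas : Measurable fun σ : ℝ => g (x', σ) :=
        hgmeas.comp (measurable_const.prodMk measurable_id)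
      set B : ℝ → ℝ≥0∞ := fun s => (X s) ^ (1/2:ℝ) * (G x') ^ (1/2:ℝ) with hB
      have step1 : ∀ s ∈ Set.Ioc (0:ℝ) ε, ENNReal.ofReal |f ε - f s| ≤ B s := by
        intro s hs
        rw [hFTC s hs]
        refine (ofRealAbsIntegralLe _ _).trans ?_
        set h1 : ℝ → ℝ≥0∞ := fun σ => ((ENNReal.ofReal (a ε σ))⁻¹) ^ (1/2:ℝ) with hh1
        set h2 : ℝ → ℝ≥0∞ := fun σ =>
          (ENNReal.ofReal (a ε σ)) ^ (1/2:ℝ) * ENNReal.ofReal |g (x', σ)| with hh2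
        have hsubset : Set.Ioc s ε ⊆ Set.Ioo (0:ℝ) 1 := fun σ hσ =>
          ⟨hs.1.trans hσ.1, lt_of_le_of_lt hσ.2 hε1⟩
        have hh1m : Measurable h1 :=
          ENNReal.continuous_rpow_const.measurable.comp
            ((ENNReal.measurable_ofReal.comp (ha_meas ε ⟨hε0, hεhalf⟩)).inv)
        have hh2m : Measurable h2 :=
          (ENNReal.continuous_rpow_const.measurable.comp
            (ENNReal.measurable_ofReal.comp (ha_meas ε ⟨hε0, hεhalf⟩))).mul
            (ENNReal.measurable_ofReal.comp hgvmeas.abs)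
        have heq : ∫⁻ σ in Set.Ioc s ε, ENNReal.ofReal |g (x', σ)|
            = ∫⁻ σ in Set.Ioc s ε, h1 σ * h2 σ := by
          refine setLIntegral_congr_fun measurableSet_Ioc
            (fun σ hσ => ?_)
          have ha' : 0 < a ε σ := ha_pos ε ⟨hε0, hεhalf⟩ σ (hsubset hσ)
          have hne0 : ENNReal.ofReal (a ε σ) ≠ 0 := by
            simp [ENNReal.ofReal_eq_zero, not_le, ha']
          have hre : h1 σ * h2 σ = (((ENNReal.ofReal (a ε σ))⁻¹) ^ (1/2:ℝ)
              * (ENNReal.ofReal (a ε σ)) ^ (1/2:ℝ)) * ENNReal.ofReal |g (x', σ)| := by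
            rw [hh1, hh2]; ring
          rw [hre, ← ENNReal.mul_rpow_of_ne_top (ENNReal.inv_ne_top.2 hne0)
            ENNReal.ofReal_ne_top, ENNReal.inv_mul_cancel hne0 ENNReal.ofReal_ne_top,
            ENNReal.one_rpow, one_mul]
        rw [heq]
        refine (holderHalf (volume.restrict (Set.Ioc s ε)) h1 h2
          hh1m.aemeasurable hh2m.aemeasurable).trans ?_
        refine mul_le_mul' ?_ ?_
        · refine ENNReal.rpow_le_rpow (le_of_eq ?_) (by norm_num)
          refine setLIntegral_congr_fun measurableSet_Ioc
            (fun σ _ => ?_)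
          rw [hh1]; exact sqrtSq _
        · refine ENNReal.rpow_le_rpow ?_ (by norm_num)
          have heq2 : ∫⁻ σ in Set.Ioc s ε, (h2 σ)^2
              = ∫⁻ σ in Set.Ioc s ε, ENNReal.ofReal (a ε σ * (g (x', σ))^2) := by
            refine setLIntegral_congr_fun measurableSet_Ioc
              (fun σ hσ => ?_)
            have ha' : 0 < a ε σ := ha_pos ε ⟨hε0, hεhalf⟩ σ (hsubset hσ)
            rw [hh2, mul_pow, sqrtSq, ← ENNReal.ofReal_pow (abs_nonneg _), sq_abs,
              ← ENNReal.ofReal_mul ha'.le]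
          rw [heq2]
          exact lintegral_mono' (Measure.restrict_mono hsubset le_rfl) le_rfl
      have hfcont : ContinuousOn f (Set.Ioo (0:ℝ) 1) := fun t ht =>
        ((hder t ht).continuousAt).continuousWithinAt
      have hIoc01 : Set.Ioc (0:ℝ) ε ⊆ Set.Ioo 0 1 := fun s hs =>
        ⟨hs.1, lt_of_le_of_lt hs.2 hε1⟩
      have hfmeas : AEMeasurable f (volume.restrict (Set.Ioc (0:ℝ) ε)) :=
        (hfcont.mono hIoc01).aemeasurable measurableSet_Ioc
      have hBmeas : Measurable B :=
        ((ENNReal.continuous_rpow_const.measurable.comp hXmeas)).mul_const _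
      have hGT : (G x') ^ (1/2:ℝ) ≠ ⊤ := ENNReal.rpow_ne_top_of_nonneg (by norm_num) hGx.ne
      have hBint : (∫⁻ s in Set.Ioc (0:ℝ) ε, B s) ≠ ⊤ := by
        have h1 : ∫⁻ s in Set.Ioc (0:ℝ) ε, B s
            = (∫⁻ s in Set.Ioc (0:ℝ) ε, (X s)^(1/2:ℝ)) * (G x')^(1/2:ℝ) :=
          lintegral_mul_const _ (ENNReal.continuous_rpow_const.measurable.comp hXmeas)
        have h2 := holderHalf (volume.restrict (Set.Ioc (0:ℝ) ε))
            (fun s => (X s)^(1/2:ℝ)) (fun _ => 1)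
            (ENNReal.continuous_rpow_const.measurable.comp hXmeas).aemeasurable
            aemeasurable_const
        simp only [mul_one] at h2
        have h3 : ∫⁻ s in Set.Ioc (0:ℝ) ε, ((X s)^(1/2:ℝ))^2
            = ∫⁻ s in Set.Ioc (0:ℝ) ε, X s :=
          setLIntegral_congr_fun measurableSet_Ioc
            (fun s _ => sqrtSq _)
        rw [h3] at h2
        rw [h1]
        refine ENNReal.mul_ne_top (ne_top_of_le_ne_top ?_ h2) hGT
        refine ENNReal.mul_ne_top (ENNReal.rpow_ne_top_of_nonneg (by norm_num) hXsum) ?_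
        refine ENNReal.rpow_ne_top_of_nonneg (by norm_num) ?_
        simp [Real.volume_Ioc]
      have hfint : IntegrableOn f (Set.Ioc (0:ℝ) ε) := by
        refine ⟨hfmeas.aestronglyMeasurable, ?_⟩
        rw [hasFiniteIntegral_iff_norm]
        have hb : ∀ s ∈ Set.Ioc (0:ℝ) ε,
            ENNReal.ofReal ‖f s‖ ≤ ENNReal.ofReal |f ε| + B s := by
          intro s hs
          have habs : |f s| ≤ |f ε| + |f ε - f s| := by
            simpa [sub_sub_cancel] using abs_sub (f ε) (f ε - f s)
          calc ENNReal.ofReal ‖f s‖ = ENNReal.ofReal |f s| := by rw [Real.norm_eq_abs]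
            _ ≤ ENNReal.ofReal (|f ε| + |f ε - f s|) := ENNReal.ofReal_le_ofReal habs
            _ ≤ ENNReal.ofReal |f ε| + ENNReal.ofReal |f ε - f s| := ENNReal.ofReal_add_le
            _ ≤ ENNReal.ofReal |f ε| + B s := add_le_add le_rfl (step1 s hs)
        calc ∫⁻ s in Set.Ioc (0:ℝ) ε, ENNReal.ofReal ‖f s‖
            ≤ ∫⁻ s in Set.Ioc (0:ℝ) ε, (ENNReal.ofReal |f ε| + B s) :=
              lintegral_mono_ae ((ae_restrict_iff' measurableSet_Ioc).2
                (Filter.Eventually.of_forall hb))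
          _ = ENNReal.ofReal |f ε| * volume (Set.Ioc (0:ℝ) ε)
              + ∫⁻ s in Set.Ioc (0:ℝ) ε, B s := by
              rw [lintegral_add_left measurable_const, lintegral_const,
                Measure.restrict_apply_univ]
          _ < ⊤ := by
              refine ENNReal.add_lt_top.2 ⟨?_, hBint.lt_top⟩
              exact ENNReal.mul_lt_top ENNReal.ofReal_lt_top (by simp [Real.volume_Ioc])
      have hvol : volume (Set.Ioc (0:ℝ) ε) = ENNReal.ofReal ε := by
        simp [Real.volume_Ioc]
      have havg : u ε (x', ε) - (1/ε) * ∫ s in Set.Ioc (0:ℝ) ε, u ε (x', s)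
          = (1/ε) * ∫ s in Set.Ioc (0:ℝ) ε, (f ε - f s) := by
        have hconst : IntegrableOn (fun _ : ℝ => f ε) (Set.Ioc (0:ℝ) ε) := by
          refine integrableOn_const ?_
          rw [hvol]; exact ENNReal.ofReal_ne_top
        rw [integral_sub hconst hfint, setIntegral_const, measureReal_def, hvol,
          ENNReal.toReal_ofReal hε0.le]
        show u ε (x', ε) - (1/ε) * ∫ s in Set.Ioc (0:ℝ) ε, f s
          = (1/ε) * (ε • f ε - ∫ s in Set.Ioc (0:ℝ) ε, f s)
        rw [smul_eq_mul]
        have : f ε = u ε (x', ε) := rfl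
        rw [this]
        field_simp
      have hBlint : ENNReal.ofReal |∫ s in Set.Ioc (0:ℝ) ε, (f ε - f s)|
          ≤ ∫⁻ s in Set.Ioc (0:ℝ) ε, B s := by
        refine (ofRealAbsIntegralLe _ _).trans ?_
        exact lintegral_mono_ae ((ae_restrict_iff' measurableSet_Ioc).2
          (Filter.Eventually.of_forall step1))
      have hDabs : ENNReal.ofReal
            |u ε (x', ε) - (1/ε) * ∫ s in Set.Ioc (0:ℝ) ε, u ε (x', s)|
          ≤ (ENNReal.ofReal ε)⁻¹ * ∫⁻ s in Set.Ioc (0:ℝ) ε, B s := by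
        rw [havg, abs_mul, abs_of_pos (by positivity : (0:ℝ) < 1/ε),
          ENNReal.ofReal_mul (by positivity : (0:ℝ) ≤ 1/ε), one_div,
          ENNReal.ofReal_inv_of_pos hε0]
        exact mul_le_mul' le_rfl hBlint
      have hsq : ENNReal.ofReal
            ((u ε (x', ε) - (1/ε) * ∫ s in Set.Ioc (0:ℝ) ε, u ε (x', s)) ^ 2)
          = (ENNReal.ofReal
            |u ε (x', ε) - (1/ε) * ∫ s in Set.Ioc (0:ℝ) ε, u ε (x', s)|) ^ 2 := by
        rw [← ENNReal.ofReal_pow (abs_nonneg _), sq_abs]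
      rw [hsq]
      have hBsq : ∫⁻ s in Set.Ioc (0:ℝ) ε, (B s)^2
          = (∫⁻ s in Set.Ioc (0:ℝ) ε, X s) * G x' := by
        have hptw : ∀ s, (B s)^2 = X s * G x' := by
          intro s
          rw [hB]
          simp only []
          rw [mul_pow, sqrtSq, sqrtSq]
        simp only [hptw]
        exact lintegral_mul_const _ hXmeas
      calc (ENNReal.ofReal
            |u ε (x', ε) - (1/ε) * ∫ s in Set.Ioc (0:ℝ) ε, u ε (x', s)|) ^ 2
          ≤ ((ENNReal.ofReal ε)⁻¹ * ∫⁻ s in Set.Ioc (0:ℝ) ε, B s) ^ 2 :=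
            pow_le_pow_left' hDabs 2
        _ = ((ENNReal.ofReal ε)⁻¹)^2 * (∫⁻ s in Set.Ioc (0:ℝ) ε, B s) ^ 2 := mul_pow _ _ 2
        _ ≤ ((ENNReal.ofReal ε)⁻¹)^2
            * (volume (Set.Ioc (0:ℝ) ε) * ∫⁻ s in Set.Ioc (0:ℝ) ε, (B s)^2) := by
            refine mul_le_mul' le_rfl ?_
            have hcs := myCS (volume.restrict (Set.Ioc (0:ℝ) ε)) (fun _ => 1) B
              aemeasurable_const hBmeas.aemeasurable
            simp only [one_mul, one_pow] at hcs
            simpa [lintegral_const, Measure.restrict_apply_univ] using hcs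
        _ = φ ε * G x' := by
            rw [hBsq, hvol, hφeq]
            rw [pow_two]
            rw [show (ENNReal.ofReal ε)⁻¹ * (ENNReal.ofReal ε)⁻¹
                * (ENNReal.ofReal ε * ((∫⁻ s in Set.Ioc (0:ℝ) ε, X s) * G x'))
              = ((ENNReal.ofReal ε)⁻¹ * ENNReal.ofReal ε)
                * ((ENNReal.ofReal ε)⁻¹ * ((∫⁻ s in Set.Ioc (0:ℝ) ε, X s) * G x')) from by ring]
            rw [ENNReal.inv_mul_cancel hε0' hεT, one_mul, mul_assoc]
    calc ∫⁻ x' in unitBox n,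
          ENNReal.ofReal ((u ε (x', ε) - (1/ε) * ∫ s in Set.Ioc (0:ℝ) ε, u ε (x', s)) ^ 2)
        ≤ ∫⁻ x' in unitBox n, φ ε * G x' :=
          lintegral_mono_ae (haeG.mono fun x' hx' => pointwise x' hx')
      _ = φ ε * ∫⁻ x' in unitBox n, G x' := lintegral_const_mul _ hGmeas
      _ ≤ φ ε * ENNReal.ofReal (2*M) := mul_le_mul' le_rfl hGle
  have hev : ∀ᶠ ε in nhdsWithin (0:ℝ) (Set.Ioo 0 (1/2)),
      (∫⁻ x' in unitBox n,
        ENNReal.ofReal ((u ε (x', ε) - (1/ε) * ∫ s in Set.Ioc (0:ℝ) ε, u ε (x', s)) ^ 2))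
        ≤ φ ε * ENNReal.ofReal (2*M) := by
    have h1 : ∀ᶠ ε in nhdsWithin (0:ℝ) (Set.Ioo 0 (1/2)), φ ε < 1 :=
      ha_nd.eventually_lt_const (by norm_num : (0:ℝ≥0∞) < 1)
    filter_upwards [h1, self_mem_nhdsWithin] with ε h1ε h2ε
    exact key ε h2ε (ne_top_of_lt h1ε)
  have hmul : Filter.Tendsto (fun ε => φ ε * ENNReal.ofReal (2*M))
      (nhdsWithin (0:ℝ) (Set.Ioo 0 (1/2))) (nhds 0) := by
    have := ENNReal.Tendsto.mul_const (b := ENNReal.ofReal (2*M)) ha_nd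
      (Or.inr ENNReal.ofReal_ne_top)
    simpa using this
  exact tendsto_of_tendsto_of_tendsto_of_le_of_le' tendsto_const_nhds hmul
    (Filter.Eventually.of_forall fun _ => zero_le) hev
end
end

section
/- Let ε ∈ (0,1/2) and define a : [0,1] → ℝ by a(x) = min(x/ε, (1−x)/ε, 1). Let u : [0,1] → ℝ be twice continuously differentiable. Then the function x ↦ a(x)u′(x) is differentiable at every x ∈ (0,1) ∖ {ε, 1−ε}, and ∫₀¹ ((a u′)′(x))² dx = ∫₀¹ a(x)² u″(x)² dx + (1/ε)( u′(ε)² + u′(1−ε)² ), where the integrand on the left-hand side is defined almost everywhere (everywhere except at x = ε and x = 1−ε). -/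
open MeasureTheory Set intervalIntegral
noncomputable section

/-- The degenerate weight `a(x) = min(x/ε, (1−x)/ε, 1)` on `[0,1]`. -/
def aWt (ε t : ℝ) : ℝ := min (t / ε) (min ((1 - t) / ε) 1)

/-- One-dimensional Reilly-type identity: for `u` twice continuously differentiable on
`[0,1]` and the weight `a(x) = min(x/ε, (1−x)/ε, 1)`, the function `a·u′` is
differentiable away from `x = ε, 1−ε`, and
`∫₀¹ ((a u′)′)² = ∫₀¹ a² (u″)² + (1/ε)(u′(ε)² + u′(1−ε)²)`. -/
theorem reilly_identity_1d
    (ε : ℝ) (hε : ε ∈ Set.Ioo (0:ℝ) (1/2))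
    (u u' u'' : ℝ → ℝ)
    (hu' : ∀ x ∈ Set.Icc (0:ℝ) 1, HasDerivWithinAt u (u' x) (Set.Icc 0 1) x)
    (hu'' : ∀ x ∈ Set.Icc (0:ℝ) 1, HasDerivWithinAt u' (u'' x) (Set.Icc 0 1) x)
    (hu''c : ContinuousOn u'' (Set.Icc 0 1)) :
    (∀ x ∈ Set.Ioo (0:ℝ) 1 \ {ε, 1 - ε},
        DifferentiableAt ℝ (fun y => aWt ε y * u' y) x) ∧
      ∫ x in Set.Ioo (0:ℝ) 1, (deriv (fun y => aWt ε y * u' y) x) ^ 2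
        = (∫ x in Set.Ioo (0:ℝ) 1, (aWt ε x) ^ 2 * (u'' x) ^ 2)
          + (1/ε) * ((u' ε) ^ 2 + (u' (1 - ε)) ^ 2) := by
  obtain ⟨hε0, hε2⟩ := hε
  have hε1 : ε < 1 - ε := by linarith
  have hεne : ε ≠ 0 := ne_of_gt hε0
  set g : ℝ → ℝ := fun y => aWt ε y * u' y with hgdef
  have hu'c : ContinuousOn u' (Icc 0 1) := fun x hx => (hu'' x hx).continuousWithinAt
  have hu'deriv : ∀ x ∈ Ioo (0:ℝ) 1, HasDerivAt u' (u'' x) x := fun x hx =>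
    (hu'' x (Ioo_subset_Icc_self hx)).hasDerivAt (Icc_mem_nhds hx.1 hx.2)
  -- piecewise description of aWt
  have ha1 : ∀ x ∈ Icc (0:ℝ) ε, aWt ε x = x / ε := by
    intro x hx
    have h1 : x / ε ≤ 1 := by rw [div_le_one hε0]; linarith [hx.2]
    have h2 : x / ε ≤ (1 - x) / ε := by
      rw [div_le_div_iff_of_pos_right hε0]; linarith [hx.2]
    exact min_eq_left (le_min h2 h1)
  have ha2 : ∀ x ∈ Icc ε (1-ε), aWt ε x = 1 := by
    intro x hx
    have h1 : 1 ≤ x / ε := by rw [le_div_iff₀ hε0]; linarith [hx.1]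
    have h2 : 1 ≤ (1 - x) / ε := by rw [le_div_iff₀ hε0]; linarith [hx.2]
    rw [aWt, min_eq_right h2, min_eq_right h1]
  have ha3 : ∀ x ∈ Icc (1-ε) 1, aWt ε x = (1 - x) / ε := by
    intro x hx
    have h1 : (1 - x) / ε ≤ 1 := by rw [div_le_one hε0]; linarith [hx.1]
    have h2 : (1 - x) / ε ≤ x / ε := by
      rw [div_le_div_iff_of_pos_right hε0]; linarith [hx.1]
    rw [aWt, min_eq_left h1, min_eq_right h2]
  -- derivative of g on the three open pieces
  have hg1 : ∀ x ∈ Ioo (0:ℝ) ε, HasDerivAt g (1/ε * u' x + x/ε * u'' x) x := by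
    intro x hx
    have hx1 : x ∈ Ioo (0:ℝ) 1 := ⟨hx.1, by linarith [hx.2]⟩
    have h := ((hasDerivAt_id x).div_const ε).mul (hu'deriv x hx1)
    apply h.congr_of_eventuallyEq
    filter_upwards [Ioo_mem_nhds hx.1 hx.2] with y hy
    simp only [hgdef, ha1 y (Ioo_subset_Icc_self hy), id_eq, Pi.mul_apply]
  have hg2 : ∀ x ∈ Ioo ε (1-ε), HasDerivAt g (u'' x) x := by
    intro x hx
    have hx1 : x ∈ Ioo (0:ℝ) 1 := ⟨by linarith [hx.1], by linarith [hx.2]⟩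
    apply (hu'deriv x hx1).congr_of_eventuallyEq
    filter_upwards [Ioo_mem_nhds hx.1 hx.2] with y hy
    simp only [hgdef, ha2 y (Ioo_subset_Icc_self hy), one_mul]
  have hg3 : ∀ x ∈ Ioo (1-ε) 1, HasDerivAt g (-(1/ε) * u' x + (1-x)/ε * u'' x) x := by
    intro x hx
    have hx1 : x ∈ Ioo (0:ℝ) 1 := ⟨by linarith [hx.1], hx.2⟩
    have h := (((hasDerivAt_const x (1:ℝ)).sub (hasDerivAt_id x)).div_const ε).mul
      (hu'deriv x hx1)
    have he : (0 - 1)/ε * u' x + (1-x)/ε * u'' x = -(1/ε) * u' x + (1-x)/ε * u'' x := by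
      ring
    simp only [id_eq, Pi.mul_def, Pi.div_def, Pi.sub_def] at h
    rw [he] at h
    apply h.congr_of_eventuallyEq
    filter_upwards [Ioo_mem_nhds hx.1 hx.2] with y hy
    simp only [hgdef, ha3 y (Ioo_subset_Icc_self hy), id_eq]
  -- differentiability claim
  have hdiff : ∀ x ∈ Set.Ioo (0:ℝ) 1 \ {ε, 1 - ε}, DifferentiableAt ℝ g x := by
    rintro x ⟨hx, hxne⟩
    simp only [mem_insert_iff, mem_singleton_iff, not_or] at hxne
    rcases lt_trichotomy x ε with h | h | h
    · exact (hg1 x ⟨hx.1, h⟩).differentiableAt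
    · exact absurd h hxne.1
    · rcases lt_trichotomy x (1-ε) with h' | h' | h'
      · exact (hg2 x ⟨h, h'⟩).differentiableAt
      · exact absurd h' hxne.2
      · exact (hg3 x ⟨h', hx.2⟩).differentiableAt
  refine ⟨hdiff, ?_⟩
  -- deriv values
  have hd1 : ∀ x ∈ Ioo (0:ℝ) ε, deriv g x = 1/ε * u' x + x/ε * u'' x :=
    fun x hx => (hg1 x hx).deriv
  have hd2 : ∀ x ∈ Ioo ε (1-ε), deriv g x = u'' x := fun x hx => (hg2 x hx).deriv
  have hd3 : ∀ x ∈ Ioo (1-ε) 1, deriv g x = -(1/ε) * u' x + (1-x)/ε * u'' x :=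
    fun x hx => (hg3 x hx).deriv
  -- named piecewise integrands
  set F1 : ℝ → ℝ := fun x => (1/ε * u' x + x/ε * u'' x)^2 with hF1def
  set F2 : ℝ → ℝ := fun x => (u'' x)^2 with hF2def
  set F3 : ℝ → ℝ := fun x => (-(1/ε) * u' x + (1-x)/ε * u'' x)^2 with hF3def
  set G : ℝ → ℝ := fun x => (aWt ε x)^2 * (u'' x)^2 with hGdef
  -- continuity facts
  have haC : Continuous (fun t => aWt ε t) := by
    unfold aWt
    fun_prop
  have hF1c : ContinuousOn F1 (Icc 0 1) := by
    apply ContinuousOn.pow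
    exact (continuousOn_const.mul hu'c).add
      ((continuousOn_id.div_const ε).mul hu''c)
  have hF2c : ContinuousOn F2 (Icc 0 1) := hu''c.pow 2
  have hF3c : ContinuousOn F3 (Icc 0 1) := by
    apply ContinuousOn.pow
    exact (continuousOn_const.mul hu'c).add
      (((continuousOn_const.sub continuousOn_id).div_const ε).mul hu''c)
  have hGc : ContinuousOn G (Icc 0 1) := ((haC.continuousOn).pow 2).mul (hu''c.pow 2)
  -- subset facts
  have hsub1 : uIcc (0:ℝ) ε ⊆ Icc 0 1 := by
    rw [uIcc_of_le hε0.le]; exact Icc_subset_Icc le_rfl (by linarith)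
  have hsub2 : uIcc ε (1-ε) ⊆ Icc 0 1 := by
    rw [uIcc_of_le hε1.le]; exact Icc_subset_Icc hε0.le (by linarith)
  have hsub3 : uIcc (1-ε) 1 ⊆ Icc 0 1 := by
    rw [uIcc_of_le (by linarith)]; exact Icc_subset_Icc (by linarith) le_rfl
  have hsI1 : Icc (0:ℝ) ε ⊆ Icc 0 1 := Icc_subset_Icc le_rfl (by linarith)
  have hsI3 : Icc (1-ε) (1:ℝ) ⊆ Icc 0 1 := Icc_subset_Icc (by linarith) le_rfl
  -- interval integrability of deriv g ^ 2 on the pieces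
  have hii1 : IntervalIntegrable (fun x => (deriv g x)^2) volume 0 ε := by
    rw [intervalIntegrable_iff_integrableOn_Ioo_of_le hε0.le]
    refine IntegrableOn.congr_fun (f := F1) ?_ (fun x hx => ?_) measurableSet_Ioo
    · exact ((hF1c.mono hsub1).intervalIntegrable.1).mono_set Ioo_subset_Ioc_self
    · simp only [hF1def, hd1 x hx]
  have hii2 : IntervalIntegrable (fun x => (deriv g x)^2) volume ε (1-ε) := by
    rw [intervalIntegrable_iff_integrableOn_Ioo_of_le hε1.le]
    refine IntegrableOn.congr_fun (f := F2) ?_ (fun x hx => ?_) measurableSet_Ioo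
    · exact ((hF2c.mono hsub2).intervalIntegrable.1).mono_set Ioo_subset_Ioc_self
    · simp only [hF2def, hd2 x hx]
  have hii3 : IntervalIntegrable (fun x => (deriv g x)^2) volume (1-ε) 1 := by
    rw [intervalIntegrable_iff_integrableOn_Ioo_of_le (by linarith : (1:ℝ)-ε ≤ 1)]
    refine IntegrableOn.congr_fun (f := F3) ?_ (fun x hx => ?_) measurableSet_Ioo
    · exact ((hF3c.mono hsub3).intervalIntegrable.1).mono_set Ioo_subset_Ioc_self
    · simp only [hF3def, hd3 x hx]
  -- turning set integrals on Ioo into interval integrals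
  have hIoo : ∀ (f : ℝ → ℝ) (a b : ℝ), a ≤ b →
      ∫ x in Ioo a b, f x = ∫ x in a..b, f x := by
    intro f a b hab
    rw [intervalIntegral.integral_of_le hab, integral_Ioc_eq_integral_Ioo]
  -- split LHS
  have hsplit : ∫ x in Ioo (0:ℝ) 1, (deriv g x)^2
      = (∫ x in (0:ℝ)..ε, (deriv g x)^2) + (∫ x in ε..(1-ε), (deriv g x)^2)
        + (∫ x in (1-ε)..1, (deriv g x)^2) := by
    rw [hIoo _ 0 1 (by norm_num),
      ← integral_add_adjacent_intervals (hii1.trans hii2) hii3,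
      ← integral_add_adjacent_intervals hii1 hii2]
  -- rewrite each piece as integral of the explicit formula
  have hswap : ∀ (a b : ℝ), a ≤ b → ∀ (F : ℝ → ℝ),
      (∀ x ∈ Ioo a b, (deriv g x)^2 = F x) →
      ∫ x in a..b, (deriv g x)^2 = ∫ x in a..b, F x := by
    intro a b hab F hF
    rw [intervalIntegral.integral_of_le hab, intervalIntegral.integral_of_le hab,
      integral_Ioc_eq_integral_Ioo, integral_Ioc_eq_integral_Ioo]
    exact setIntegral_congr_fun measurableSet_Ioo hF
  have hL1 : ∫ x in (0:ℝ)..ε, (deriv g x)^2 = ∫ x in (0:ℝ)..ε, F1 x :=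
    hswap 0 ε hε0.le F1 (fun x hx => by simp only [hF1def, hd1 x hx])
  have hL2 : ∫ x in ε..(1-ε), (deriv g x)^2 = ∫ x in ε..(1-ε), F2 x :=
    hswap ε (1-ε) hε1.le F2 (fun x hx => by simp only [hF2def, hd2 x hx])
  have hL3 : ∫ x in (1-ε)..1, (deriv g x)^2 = ∫ x in (1-ε)..1, F3 x :=
    hswap (1-ε) 1 (by linarith) F3 (fun x hx => by simp only [hF3def, hd3 x hx])
  -- split RHS weighted integral
  have hGii : ∀ a b : ℝ, uIcc a b ⊆ Icc 0 1 → IntervalIntegrable G volume a b :=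
    fun a b h => (hGc.mono h).intervalIntegrable
  have hsplitR : ∫ x in Ioo (0:ℝ) 1, G x
      = (∫ x in (0:ℝ)..ε, G x) + (∫ x in ε..(1-ε), G x) + (∫ x in (1-ε)..1, G x) := by
    rw [hIoo _ 0 1 (by norm_num),
      ← integral_add_adjacent_intervals ((hGii 0 ε hsub1).trans (hGii ε (1-ε) hsub2))
        (hGii (1-ε) 1 hsub3),
      ← integral_add_adjacent_intervals (hGii 0 ε hsub1) (hGii ε (1-ε) hsub2)]
  -- FTC computations
  have hint_u' : IntervalIntegrable u' volume 0 1 := by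
    apply ContinuousOn.intervalIntegrable; rwa [uIcc_of_le (by norm_num : (0:ℝ) ≤ 1)]
  -- piece 1: ∫ F1 = ∫ G + (1/ε) u'(ε)^2
  have hP1 : ∫ x in (0:ℝ)..ε, F1 x = (∫ x in (0:ℝ)..ε, G x) + (1/ε) * (u' ε)^2 := by
    have hint : IntervalIntegrable (fun x => (u' x)^2 + x * (2 * u' x * u'' x))
        volume 0 ε := by
      apply ContinuousOn.intervalIntegrable
      refine ContinuousOn.mono ?_ hsub1
      exact (hu'c.pow 2).add
        (continuousOn_id.mul ((continuousOn_const.mul hu'c).mul hu''c))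
    have ftc : ∫ x in (0:ℝ)..ε, ((u' x)^2 + x * (2 * u' x * u'' x))
        = ε * (u' ε)^2 - 0 * (u' 0)^2 := by
      refine integral_eq_sub_of_hasDeriv_right_of_le (f := fun x => x * (u' x)^2)
        hε0.le ?_ ?_ ?_
      · exact (continuousOn_id.mul ((hu'c.mono hsI1).pow 2))
      · intro x hx
        have hx1 : x ∈ Ioo (0:ℝ) 1 := ⟨hx.1, by linarith [hx.2]⟩
        have h := (hasDerivAt_id x).mul (((hu'deriv x hx1)).pow 2)
        norm_num only [id_eq, Pi.mul_def, Pi.pow_apply, Pi.sub_apply] at h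
        have h2 : HasDerivAt (fun y => y * (u' y)^2)
            ((u' x)^2 + x * (2 * u' x * u'' x)) x := by
          exact h.congr_deriv (by ring)
        exact h2.hasDerivWithinAt
      · exact hint
    have hGint : IntervalIntegrable G volume 0 ε := hGii 0 ε hsub1
    have hcongr : ∫ x in (0:ℝ)..ε, F1 x
        = ∫ x in (0:ℝ)..ε, (G x + (1/ε^2) * ((u' x)^2 + x * (2 * u' x * u'' x))) := by
      apply intervalIntegral.integral_congr
      intro x hx
      rw [uIcc_of_le hε0.le] at hx
      simp only [hF1def, hGdef, ha1 x hx]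
      field_simp
      ring
    rw [hcongr, intervalIntegral.integral_add hGint (hint.const_mul _),
      intervalIntegral.integral_const_mul, ftc]
    field_simp
    ring
  -- piece 2: ∫ F2 = ∫ G
  have hP2 : ∫ x in ε..(1-ε), F2 x = ∫ x in ε..(1-ε), G x := by
    apply intervalIntegral.integral_congr
    intro x hx
    rw [uIcc_of_le hε1.le] at hx
    simp only [hF2def, hGdef, ha2 x hx, one_pow, one_mul]
  -- piece 3: ∫ F3 = ∫ G + (1/ε) u'(1-ε)^2
  have hP3 : ∫ x in (1-ε)..1, F3 x = (∫ x in (1-ε)..1, G x) + (1/ε) * (u' (1-ε))^2 := by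
    have hint : IntervalIntegrable
        (fun x => -(u' x)^2 + (1-x) * (2 * u' x * u'' x)) volume (1-ε) 1 := by
      apply ContinuousOn.intervalIntegrable
      refine ContinuousOn.mono ?_ hsub3
      exact ((hu'c.pow 2).neg).add
        ((continuousOn_const.sub continuousOn_id).mul
          ((continuousOn_const.mul hu'c).mul hu''c))
    have ftc : ∫ x in (1-ε)..1, (-(u' x)^2 + (1-x) * (2 * u' x * u'' x))
        = (1-(1:ℝ)) * (u' 1)^2 - (1-(1-ε)) * (u' (1-ε))^2 := by
      refine integral_eq_sub_of_hasDeriv_right_of_le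
        (f := fun x => (1-x) * (u' x)^2) (by linarith) ?_ ?_ ?_
      · exact ((continuousOn_const.sub continuousOn_id).mul ((hu'c.mono hsI3).pow 2))
      · intro x hx
        have hx1 : x ∈ Ioo (0:ℝ) 1 := ⟨by linarith [hx.1], hx.2⟩
        have h := ((hasDerivAt_const x (1:ℝ)).sub (hasDerivAt_id x)).mul
          (((hu'deriv x hx1)).pow 2)
        norm_num only [id_eq, Pi.mul_def, Pi.pow_apply, Pi.sub_apply] at h
        have h2 : HasDerivAt (fun y => (1-y) * (u' y)^2)
            (-(u' x)^2 + (1-x) * (2 * u' x * u'' x)) x := by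
          exact h.congr_deriv (by ring)
        exact h2.hasDerivWithinAt
      · exact hint
    have hGint : IntervalIntegrable G volume (1-ε) 1 := hGii (1-ε) 1 hsub3
    have hcongr : ∫ x in (1-ε)..1, F3 x
        = ∫ x in (1-ε)..1,
            (G x + (-(1/ε^2)) * (-(u' x)^2 + (1-x) * (2 * u' x * u'' x))) := by
      apply intervalIntegral.integral_congr
      intro x hx
      rw [uIcc_of_le (by linarith : (1:ℝ)-ε ≤ 1)] at hx
      simp only [hF3def, hGdef, ha3 x hx]
      field_simp
      ring
    rw [hcongr, intervalIntegral.integral_add hGint (hint.const_mul _),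
      intervalIntegral.integral_const_mul, ftc]
    field_simp
    ring
  -- combine
  show ∫ x in Ioo (0:ℝ) 1, (deriv g x)^2
      = (∫ x in Ioo (0:ℝ) 1, G x) + (1/ε) * ((u' ε)^2 + (u' (1-ε))^2)
  rw [hsplit, hL1, hL2, hL3, hP1, hP2, hP3, hsplitR]
  ring
end
end

section
/- Let ε ∈ (0,1/2) and define a : (0,1) → ℝ by a(x) = min(x/ε, (1−x)/ε, 1). Let u : (0,1) → ℝ be differentiable, assume ∫₀¹ a(x) u′(x)² dx < ∞, and assume that the function g(x) = a(x) u′(x) is differentiable on (0,1) ∖ {ε, 1−ε} with ∫₀¹ g′(x)² dx < ∞ and g(x) = g(1/2) + ∫_{1/2}^{x} g′(t) dt for all x ∈ (0,1). Then lim_{x→0⁺} a(x) u′(x) = 0 and lim_{x→1⁻} a(x) u′(x) = 0. -/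
open MeasureTheory
open scoped ENNReal
noncomputable section

lemma aux_lintegral_inv_top {c δ : ℝ} (hc : 0 < c) (hδ : 0 < δ) :
    ∫⁻ x in Set.Ioo (0:ℝ) δ, ENNReal.ofReal (c * x⁻¹) = ⊤ := by
  by_contra h
  have hmeas : Measurable fun x : ℝ => c * x⁻¹ := measurable_const.mul measurable_inv
  have hnonneg : 0 ≤ᵐ[volume.restrict (Set.Ioo (0:ℝ) δ)] fun x : ℝ => c * x⁻¹ := by
    refine (ae_restrict_iff' measurableSet_Ioo).2 (Filter.Eventually.of_forall ?_)
    intro x hx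
    have : 0 < x := hx.1
    positivity
  have hint : IntegrableOn (fun x : ℝ => c * x⁻¹) (Set.Ioo 0 δ) := by
    refine ⟨hmeas.aestronglyMeasurable, ?_⟩
    rw [hasFiniteIntegral_iff_ofReal hnonneg]
    exact lt_top_iff_ne_top.2 h
  have hinv : IntegrableOn (fun x : ℝ => x⁻¹) (Set.Ioo 0 δ) := by
    have h2 : IntegrableOn (c⁻¹ • fun x : ℝ => c * x⁻¹) (Set.Ioo 0 δ) := hint.smul c⁻¹
    refine IntegrableOn.congr_fun h2 ?_ measurableSet_Ioo
    intro x _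
    simp [smul_eq_mul, ← mul_assoc, inv_mul_cancel₀ hc.ne']
  have hrpow : IntegrableOn (fun x : ℝ => x ^ (-1 : ℝ)) (Set.Ioo 0 δ) := by
    refine hinv.congr_fun ?_ measurableSet_Ioo
    intro x hx
    exact (Real.rpow_neg_one x).symm
  rw [intervalIntegral.integrableOn_Ioo_rpow_iff hδ] at hrpow
  linarith

lemma aux_limit_zero {f : ℝ → ℝ} {c δ L : ℝ} (hc : 0 < c) (hδ : 0 < δ)
    (hfin : ∫⁻ x in Set.Ioo (0:ℝ) δ, ENNReal.ofReal (c * f x ^ 2 * x⁻¹) < ⊤)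
    (hlim : Filter.Tendsto f (nhdsWithin 0 (Set.Ioi 0)) (nhds L)) : L = 0 := by
  by_contra hL
  have hL2 : 0 < |L| / 2 := by positivity
  have h1 : ∀ᶠ x in nhdsWithin (0:ℝ) (Set.Ioi 0), |f x - L| < |L| / 2 := by
    have := Metric.tendsto_nhds.1 hlim (|L| / 2) hL2
    simpa [Real.dist_eq] using this
  obtain ⟨u, hu, hsub⟩ := mem_nhdsGT_iff_exists_Ioo_subset.1 h1
  set δ' := min u δ with hδ'def
  have hδ' : 0 < δ' := lt_min hu hδ
  have hbound : ∀ x ∈ Set.Ioo (0:ℝ) δ',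
      (c * L ^ 2 / 4) * x⁻¹ ≤ c * f x ^ 2 * x⁻¹ := by
    intro x hx
    have hx0 : 0 < x := hx.1
    have hxu : x ∈ Set.Ioo (0:ℝ) u := ⟨hx0, lt_of_lt_of_le hx.2 (min_le_left _ _)⟩
    have hfx : |L| / 2 ≤ |f x| := by
      have h2 : |f x - L| < |L| / 2 := hsub hxu
      have h3 := abs_sub_abs_le_abs_sub L (f x)
      rw [abs_sub_comm L (f x)] at h3
      linarith
    have hsq : L ^ 2 / 4 ≤ f x ^ 2 := by
      have h3 : (|L| / 2) ^ 2 ≤ |f x| ^ 2 :=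
        pow_le_pow_left₀ (by positivity) hfx 2
      calc L ^ 2 / 4 = (|L| / 2) ^ 2 := by rw [div_pow, sq_abs]; ring
        _ ≤ |f x| ^ 2 := h3
        _ = f x ^ 2 := sq_abs _
    have hxinv : (0:ℝ) ≤ x⁻¹ := by positivity
    have : c * (L ^ 2 / 4) ≤ c * f x ^ 2 := by nlinarith
    calc (c * L ^ 2 / 4) * x⁻¹ = (c * (L ^ 2 / 4)) * x⁻¹ := by ring
      _ ≤ (c * f x ^ 2) * x⁻¹ := mul_le_mul_of_nonneg_right this hxinv
  have hc' : 0 < c * L ^ 2 / 4 := by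
    have : L ^ 2 > 0 := by positivity
    positivity
  have htop : (⊤ : ℝ≥0∞) ≤ ∫⁻ x in Set.Ioo (0:ℝ) δ, ENNReal.ofReal (c * f x ^ 2 * x⁻¹) := by
    calc (⊤ : ℝ≥0∞) = ∫⁻ x in Set.Ioo (0:ℝ) δ', ENNReal.ofReal ((c * L ^ 2 / 4) * x⁻¹) :=
          (aux_lintegral_inv_top hc' hδ').symm
      _ ≤ ∫⁻ x in Set.Ioo (0:ℝ) δ', ENNReal.ofReal (c * f x ^ 2 * x⁻¹) := by
          refine lintegral_mono_ae ((ae_restrict_iff' measurableSet_Ioo).2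
            (Filter.Eventually.of_forall fun x hx => ?_))
          exact ENNReal.ofReal_le_ofReal (hbound x hx)
      _ ≤ ∫⁻ x in Set.Ioo (0:ℝ) δ, ENNReal.ofReal (c * f x ^ 2 * x⁻¹) :=
          lintegral_mono_set (Set.Ioo_subset_Ioo le_rfl (min_le_right _ _))
  exact (lt_irrefl ⊤ (lt_of_le_of_lt htop hfin)).elim

/-- One-dimensional vanishing of the natural boundary flux: if `u` is differentiable on
`(0,1)` with finite weighted energy `∫₀¹ a u′² < ∞`, and `g = a u′` is differentiable on
`(0,1) ∖ {ε, 1−ε}` with `∫₀¹ (g′)² < ∞` and `g(x) = g(1/2) + ∫_{1/2}^x g′`, then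
`a u′ → 0` at both endpoints, even though no boundary condition is imposed. -/
theorem flux_vanishes_1d
    (ε : ℝ) (hε : ε ∈ Set.Ioo (0:ℝ) (1/2))
    (u u' g' : ℝ → ℝ)
    (hu : ∀ x ∈ Set.Ioo (0:ℝ) 1, HasDerivAt u (u' x) x)
    (hE : ∫⁻ x in Set.Ioo (0:ℝ) 1, ENNReal.ofReal (aWt ε x * (u' x) ^ 2) < ⊤)
    (hg : ∀ x ∈ Set.Ioo (0:ℝ) 1 \ {ε, 1 - ε},
      HasDerivAt (fun y => aWt ε y * u' y) (g' x) x)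
    (hg' : ∫⁻ x in Set.Ioo (0:ℝ) 1, ENNReal.ofReal ((g' x) ^ 2) < ⊤)
    (hFTC : ∀ x ∈ Set.Ioo (0:ℝ) 1,
      aWt ε x * u' x = aWt ε (1/2) * u' (1/2) + ∫ t in (1/2 : ℝ)..x, g' t) :
    Filter.Tendsto (fun x => aWt ε x * u' x) (nhdsWithin 0 (Set.Ioi 0)) (nhds 0) ∧
      Filter.Tendsto (fun x => aWt ε x * u' x) (nhdsWithin 1 (Set.Iio 1)) (nhds 0) := by
  obtain ⟨hε0, hε12⟩ := hε
  set g : ℝ → ℝ := fun x => aWt ε x * u' x with hgdef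
  -- the weight near the endpoints
  have ha0 : ∀ x ∈ Set.Ioo (0:ℝ) ε, aWt ε x = x / ε := by
    intro x hx
    have h1 : x / ε ≤ (1 - x) / ε := by gcongr <;> linarith [hx.2]
    have h2 : x / ε ≤ 1 := ((div_lt_one hε0).2 hx.2).le
    exact min_eq_left (le_min h1 h2)
  have ha1 : ∀ x ∈ Set.Ioo (1 - ε) (1:ℝ), aWt ε x = (1 - x) / ε := by
    intro x hx
    have h1 : (1 - x) / ε ≤ 1 := (div_le_one hε0).2 (by linarith [hx.1])
    have h2 : (1 - x) / ε ≤ x / ε := by gcongr <;> linarith [hx.1]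
    rw [aWt, min_eq_left h1, min_eq_right h2]
  -- a.e. identification of `g'` with a measurable function
  have hpair : (volume : Measure ℝ) ({ε, 1 - ε} : Set ℝ) = 0 :=
    ((Set.finite_singleton (1 - ε)).insert ε).countable.measure_zero volume
  have hgderiv : ∀ᵐ x ∂(volume.restrict (Set.Ioo (0:ℝ) 1)), g' x = deriv g x := by
    have h1 : ∀ᵐ x ∂(volume.restrict (Set.Ioo (0:ℝ) 1)), x ∈ Set.Ioo (0:ℝ) 1 :=
      ae_restrict_mem measurableSet_Ioo
    have h2 : ∀ᵐ x ∂(volume.restrict (Set.Ioo (0:ℝ) 1)), x ∉ ({ε, 1 - ε} : Set ℝ) :=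
      ae_restrict_of_ae (measure_eq_zero_iff_ae_notMem.1 hpair)
    filter_upwards [h1, h2] with x hx1 hx2
    exact ((hg x ⟨hx1, hx2⟩).deriv).symm
  have hgeq : g' =ᵐ[volume.restrict (Set.Ioo (0:ℝ) 1)] deriv g := hgderiv
  have hg'aemeas : AEMeasurable g' (volume.restrict (Set.Ioo (0:ℝ) 1)) :=
    (measurable_deriv g).aemeasurable.congr hgeq.symm
  -- integrability of g' on (0,1)
  have hint : IntegrableOn g' (Set.Ioo (0:ℝ) 1) := by
    refine ⟨hg'aemeas.aestronglyMeasurable, ?_⟩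
    rw [hasFiniteIntegral_iff_norm]
    calc ∫⁻ x in Set.Ioo (0:ℝ) 1, ENNReal.ofReal ‖g' x‖
        ≤ ∫⁻ x in Set.Ioo (0:ℝ) 1, (ENNReal.ofReal ((g' x) ^ 2) + 1) := by
          refine lintegral_mono fun x => ?_
          have h1 : ‖g' x‖ ≤ (g' x) ^ 2 + 1 := by
            rw [Real.norm_eq_abs]
            nlinarith [sq_abs (g' x), sq_nonneg (|g' x| - 1), abs_nonneg (g' x)]
          calc ENNReal.ofReal ‖g' x‖ ≤ ENNReal.ofReal ((g' x) ^ 2 + 1) :=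
                ENNReal.ofReal_le_ofReal h1
            _ ≤ ENNReal.ofReal ((g' x) ^ 2) + ENNReal.ofReal 1 := ENNReal.ofReal_add_le
            _ = ENNReal.ofReal ((g' x) ^ 2) + 1 := by norm_num
      _ = (∫⁻ x in Set.Ioo (0:ℝ) 1, ENNReal.ofReal ((g' x) ^ 2))
            + volume (Set.Ioo (0:ℝ) 1) := by
          rw [lintegral_add_right' _ aemeasurable_const, lintegral_const,
            Measure.restrict_apply_univ, one_mul]
      _ < ⊤ := ENNReal.add_lt_top.2 ⟨hg', by simp [Real.volume_Ioo]⟩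
  have hII : IntervalIntegrable g' volume 0 1 := by
    rw [intervalIntegrable_iff_integrableOn_Ioo_of_le zero_le_one]
    exact hint
  -- the primitive and its one-sided limits
  set F : ℝ → ℝ := fun x => ∫ t in (1/2:ℝ)..x, g' t with hFdef
  have hmem : (1/2:ℝ) ∈ Set.uIcc (0:ℝ) 1 := by
    rw [Set.uIcc_of_le zero_le_one]
    constructor <;> norm_num
  have hFcont : ContinuousOn F (Set.uIcc (0:ℝ) 1) :=
    intervalIntegral.continuousOn_primitive_interval' hII hmem
  have hsubIoo : Set.Ioo (0:ℝ) 1 ⊆ Set.uIcc (0:ℝ) 1 := by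
    rw [Set.uIcc_of_le zero_le_one]
    exact Set.Ioo_subset_Icc_self
  have hF0 : Filter.Tendsto F (nhdsWithin (0:ℝ) (Set.Ioo 0 1)) (nhds (F 0)) := by
    have h := hFcont 0 (by rw [Set.uIcc_of_le zero_le_one]; exact ⟨le_rfl, zero_le_one⟩)
    exact h.tendsto.mono_left (nhdsWithin_mono 0 hsubIoo)
  have hF1 : Filter.Tendsto F (nhdsWithin (1:ℝ) (Set.Ioo 0 1)) (nhds (F 1)) := by
    have h := hFcont 1 (by rw [Set.uIcc_of_le zero_le_one]; exact ⟨zero_le_one, le_rfl⟩)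
    exact h.tendsto.mono_left (nhdsWithin_mono 1 hsubIoo)
  -- filter identifications
  have hfilter0 : nhdsWithin (0:ℝ) (Set.Ioi 0) = nhdsWithin 0 (Set.Ioo 0 1) := by
    refine nhdsWithin_eq_iff_eventuallyEq.2 (Filter.eventuallyEq_set.2 ?_)
    filter_upwards [Iio_mem_nhds (by norm_num : (0:ℝ) < 1)] with x hx
    exact ⟨fun h => ⟨h, hx⟩, fun h => h.1⟩
  have hfilter1 : nhdsWithin (1:ℝ) (Set.Iio 1) = nhdsWithin 1 (Set.Ioo 0 1) := by
    refine nhdsWithin_eq_iff_eventuallyEq.2 (Filter.eventuallyEq_set.2 ?_)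
    filter_upwards [Ioi_mem_nhds (by norm_num : (0:ℝ) < 1)] with x hx
    exact ⟨fun h => ⟨hx, h⟩, fun h => h.2⟩
  -- limits of g at the endpoints
  have hgt0 : Filter.Tendsto g (nhdsWithin (0:ℝ) (Set.Ioi 0))
      (nhds (aWt ε (1/2) * u' (1/2) + F 0)) := by
    rw [hfilter0]
    refine Filter.Tendsto.congr' ?_ (tendsto_const_nhds.add hF0)
    filter_upwards [self_mem_nhdsWithin] with x hx
    exact (hFTC x hx).symm
  have hgt1 : Filter.Tendsto g (nhdsWithin (1:ℝ) (Set.Iio 1))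
      (nhds (aWt ε (1/2) * u' (1/2) + F 1)) := by
    rw [hfilter1]
    refine Filter.Tendsto.congr' ?_ (tendsto_const_nhds.add hF1)
    filter_upwards [self_mem_nhdsWithin] with x hx
    exact (hFTC x hx).symm
  -- the limit at 0 vanishes
  have hL0 : aWt ε (1/2) * u' (1/2) + F 0 = 0 := by
    refine aux_limit_zero hε0 hε0 ?_ hgt0
    have heq : ∫⁻ x in Set.Ioo (0:ℝ) ε, ENNReal.ofReal (ε * g x ^ 2 * x⁻¹)
        = ∫⁻ x in Set.Ioo (0:ℝ) ε, ENNReal.ofReal (aWt ε x * (u' x) ^ 2) := by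
      refine setLIntegral_congr_fun measurableSet_Ioo
        (fun x hx => ?_)
      congr 1
      simp only [hgdef]
      rw [ha0 x hx]
      have hx0 : x ≠ 0 := ne_of_gt hx.1
      have hε0' : ε ≠ 0 := ne_of_gt hε0
      field_simp
    rw [heq]
    exact lt_of_le_of_lt
      (lintegral_mono_set (Set.Ioo_subset_Ioo le_rfl (by linarith))) hE
  -- the limit at 1 vanishes, via reflection
  have htr : Filter.Tendsto (fun x : ℝ => 1 - x) (nhdsWithin (0:ℝ) (Set.Ioi 0))
      (nhdsWithin (1:ℝ) (Set.Iio 1)) := by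
    rw [tendsto_nhdsWithin_iff]
    constructor
    · have h : Continuous (fun x : ℝ => 1 - x) := continuous_const.sub continuous_id
      have h2 := h.tendsto (0:ℝ)
      simp only [sub_zero] at h2
      exact h2.mono_left nhdsWithin_le_nhds
    · filter_upwards [self_mem_nhdsWithin] with x hx
      have : (0:ℝ) < x := hx
      simp only [Set.mem_Iio]
      linarith
  have hL1 : aWt ε (1/2) * u' (1/2) + F 1 = 0 := by
    refine aux_limit_zero hε0 hε0 ?_ (hgt1.comp htr)
    have hmp : MeasurePreserving (fun x : ℝ => 1 - x) volume volume :=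
      Measure.measurePreserving_sub_left volume 1
    have hemb : MeasurableEmbedding (fun x : ℝ => 1 - x) :=
      (MeasurableEquiv.subLeft (1:ℝ)).measurableEmbedding
    have himg : (fun x : ℝ => 1 - x) '' Set.Ioo 0 ε = Set.Ioo (1 - ε) 1 := by
      rw [Set.image_const_sub_Ioo]
      norm_num
    have h1 : ∫⁻ x in Set.Ioo (0:ℝ) ε, ENNReal.ofReal (ε * ((g ∘ fun x => 1 - x) x) ^ 2 * x⁻¹)
        = ∫⁻ y in Set.Ioo (1 - ε) (1:ℝ), ENNReal.ofReal (ε * g y ^ 2 * (1 - y)⁻¹) := by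
      have h2 := hmp.setLIntegral_comp_emb hemb
        (fun y => ENNReal.ofReal (ε * g y ^ 2 * (1 - y)⁻¹)) (Set.Ioo 0 ε)
      rw [himg] at h2
      rw [← h2]
      refine lintegral_congr fun x => ?_
      simp [sub_sub_cancel, Function.comp]
    rw [h1]
    have heq : ∫⁻ y in Set.Ioo (1 - ε) (1:ℝ), ENNReal.ofReal (ε * g y ^ 2 * (1 - y)⁻¹)
        = ∫⁻ y in Set.Ioo (1 - ε) (1:ℝ), ENNReal.ofReal (aWt ε y * (u' y) ^ 2) := by
      refine setLIntegral_congr_fun measurableSet_Ioo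
        (fun y hy => ?_)
      congr 1
      simp only [hgdef]
      rw [ha1 y hy]
      have h1y : (1:ℝ) - y ≠ 0 := by
        have := hy.2
        intro h
        nlinarith
      have hε0' : ε ≠ 0 := ne_of_gt hε0
      field_simp
    rw [heq]
    exact lt_of_le_of_lt
      (lintegral_mono_set (Set.Ioo_subset_Ioo (by linarith) le_rfl)) hE
  rw [hL0] at hgt0
  rw [hL1] at hgt1
  exact ⟨hgt0, hgt1⟩
end
end

section
/- Let p > 0, α > 0 and β > 0 satisfy α < 1/p + 1 and β + 1 > α. For ε > 0 define a_ε : (0,∞) → (0,∞) by a_ε(d) = min(1, d^α/ε^β). Then (1/ε) ∫₀^ε ( ∫ₛ^ε a_ε(σ)⁻¹ dσ )^p ds → 0 as ε → 0⁺. -/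
open MeasureTheory
noncomputable section

section
open intervalIntegral
lemma ioc_integral_rpow {r : ℝ} (hr : -1 < r) {ε : ℝ} (hε : 0 ≤ ε) :
    ∫ x in Set.Ioc (0:ℝ) ε, x ^ r = ε ^ (r + 1) / (r + 1) := by
  rw [← integral_of_le hε, integral_rpow (Or.inl hr),
    Real.zero_rpow (by linarith : r + 1 ≠ 0), sub_zero]
end

lemma add_rpow_le_two_rpow (a b p : ℝ) (ha : 0 ≤ a) (hb : 0 ≤ b) (hp : 0 ≤ p) :
    (a + b) ^ p ≤ 2 ^ p * (a ^ p + b ^ p) := by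
  have h1 : a + b ≤ 2 * max a b := by
    rcases le_total a b with h | h
    · rw [max_eq_right h]; linarith
    · rw [max_eq_left h]; linarith
  have h2 : (a + b) ^ p ≤ (2 * max a b) ^ p :=
    Real.rpow_le_rpow (by positivity) h1 hp
  have h3 : (2 * max a b) ^ p = 2 ^ p * (max a b) ^ p :=
    Real.mul_rpow (by norm_num) (le_max_of_le_left ha)
  have h2p : (0:ℝ) ≤ 2 ^ p := Real.rpow_nonneg (by norm_num) p
  have h4 : (max a b) ^ p ≤ a ^ p + b ^ p := by
    rcases le_total a b with h | h
    · rw [max_eq_right h]; nlinarith [Real.rpow_nonneg ha p]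
    · rw [max_eq_left h]; nlinarith [Real.rpow_nonneg hb p]
  calc (a + b) ^ p ≤ 2 ^ p * (max a b) ^ p := by rw [← h3]; exact h2
    _ ≤ 2 ^ p * (a ^ p + b ^ p) := by nlinarith

/-- The power-type weights `a_ε(d) = min(1, d^α/ε^β)` with `α < 1/p + 1` and `β + 1 > α`
satisfy the non-degeneracy condition
`(1/ε) ∫₀^ε (∫ₛ^ε a_ε(σ)⁻¹ dσ)^p ds → 0` as `ε → 0⁺`. -/
theorem power_weight_nondegeneracy
    (p α β : ℝ) (hp : 0 < p) (hα : 0 < α) (hβ : 0 < β)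
    (hαp : α < 1/p + 1) (hβα : β + 1 > α) :
    Filter.Tendsto
      (fun ε : ℝ => (1/ε) * ∫ s in Set.Ioc (0:ℝ) ε,
        (∫ σ in Set.Ioc s ε, (min 1 (σ ^ α / ε ^ β))⁻¹) ^ p)
      (nhdsWithin 0 (Set.Ioi 0)) (nhds 0) := by
  have hp' : 0 < 1/p := by positivity
  have hα1 : α - 1 < 1/p := by linarith
  obtain ⟨θ, hθ0, hθα, hθinv⟩ : ∃ θ : ℝ, 0 ≤ θ ∧ α - 1 < θ ∧ θ < 1/p :=
    ⟨max 0 ((α - 1 + 1/p)/2), le_max_left _ _, lt_max_of_lt_right (by linarith),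
      max_lt hp' (by linarith)⟩
  have hθp : θ * p < 1 := by
    rw [lt_div_iff₀ hp] at hθinv; linarith
  obtain ⟨c, hcdef⟩ : ∃ c : ℝ, c = θ - α + 1 := ⟨_, rfl⟩
  have hc : 0 < c := by rw [hcdef]; linarith
  have hexp : (-1:ℝ) < θ - α := by linarith
  have hexp2 : (-1:ℝ) < -(θ * p) := by linarith
  obtain ⟨K, hKdef⟩ : ∃ K : ℝ, K = 2 ^ p / (c ^ p * (1 - θ * p)) := ⟨_, rfl⟩
  -- the upper bound
  have key : ∀ ε ∈ Set.Ioi (0:ℝ),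
      (1/ε) * (∫ s in Set.Ioc (0:ℝ) ε,
          (∫ σ in Set.Ioc s ε, (min 1 (σ ^ α / ε ^ β))⁻¹) ^ p)
        ≤ 2 ^ p * ε ^ p + K * ε ^ (p * (β + 1 - α)) := by
    intro ε hε
    rw [Set.mem_Ioi] at hε
    have hεβ : (0:ℝ) < ε ^ β := Real.rpow_pos_of_pos hε β
    obtain ⟨B, hBdef⟩ : ∃ B : ℝ, B = ε ^ β * (ε ^ c / c) := ⟨_, rfl⟩
    have hB : 0 ≤ B := by rw [hBdef]; positivity
    -- integrability of the majorant of the inner integrand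
    have hrint : IntegrableOn (fun σ : ℝ => σ ^ (θ - α)) (Set.Ioc 0 ε) :=
      (intervalIntegrable_iff_integrableOn_Ioc_of_le hε.le).mp
        (intervalIntegral.intervalIntegrable_rpow' hexp)
    have hrval : (∫ σ in Set.Ioc (0:ℝ) ε, σ ^ (θ - α)) = ε ^ c / c := by
      rw [ioc_integral_rpow hexp hε.le, hcdef]
    -- inner bound
    have inner_nonneg : ∀ s ∈ Set.Ioc (0:ℝ) ε,
        0 ≤ ∫ σ in Set.Ioc s ε, (min 1 (σ ^ α / ε ^ β))⁻¹ := by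
      intro s hs
      refine setIntegral_nonneg measurableSet_Ioc fun σ hσ => ?_
      have hσ0 : 0 < σ := lt_trans hs.1 hσ.1
      have : 0 ≤ min 1 (σ ^ α / ε ^ β) :=
        le_min zero_le_one (by positivity)
      positivity
    have inner : ∀ s ∈ Set.Ioc (0:ℝ) ε,
        (∫ σ in Set.Ioc s ε, (min 1 (σ ^ α / ε ^ β))⁻¹)
          ≤ ε + B * s ^ (-θ) := by
      intro s hs
      obtain ⟨hs0, hsε⟩ := hs
      set h : ℝ → ℝ := fun σ => 1 + ε ^ β * s ^ (-θ) * σ ^ (θ - α) with hhdef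
      have hhint : IntegrableOn h (Set.Ioc 0 ε) := by
        exact ((integrableOn_const_iff (by simp)).mpr (Or.inr (by simp [Real.volume_Ioc]))).add
          (hrint.const_mul _)
      have hhnn : ∀ σ ∈ Set.Ioc (0:ℝ) ε, 0 ≤ h σ := by
        intro σ hσ
        have hσ0 : 0 < σ := hσ.1
        have hs' : (0:ℝ) ≤ s ^ (-θ) := Real.rpow_nonneg hs0.le _
        have : (0:ℝ) ≤ σ ^ (θ - α) := Real.rpow_nonneg hσ0.le _
        positivity
      have hbound : ∀ σ ∈ Set.Ioc s ε, (min 1 (σ ^ α / ε ^ β))⁻¹ ≤ h σ := by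
        intro σ hσ
        have hσ0 : 0 < σ := lt_trans hs0 hσ.1
        have hσα : 0 < σ ^ α := Real.rpow_pos_of_pos hσ0 α
        have key2 : (min 1 (σ ^ α / ε ^ β))⁻¹ ≤ 1 + ε ^ β * (σ ^ α)⁻¹ := by
          rcases le_total 1 (σ ^ α / ε ^ β) with hle | hle
          · rw [min_eq_left hle]
            have : 0 ≤ ε ^ β * (σ ^ α)⁻¹ := by positivity
            simp; linarith
          · rw [min_eq_right hle]
            have : (σ ^ α / ε ^ β)⁻¹ = ε ^ β * (σ ^ α)⁻¹ := by
              field_simp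
            rw [this]; linarith
        have key3 : (σ ^ α)⁻¹ ≤ s ^ (-θ) * σ ^ (θ - α) := by
          have e1 : (σ ^ α)⁻¹ = σ ^ (-α) := (Real.rpow_neg hσ0.le α).symm
          have e2 : σ ^ (-α) = σ ^ (-θ) * σ ^ (θ - α) := by
            rw [← Real.rpow_add hσ0]; ring_nf
          have e3 : σ ^ (-θ) ≤ s ^ (-θ) :=
            Real.rpow_le_rpow_of_nonpos hs0 hσ.1.le (by linarith)
          have e4 : (0:ℝ) ≤ σ ^ (θ - α) := Real.rpow_nonneg hσ0.le _
          rw [e1, e2]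
          exact mul_le_mul_of_nonneg_right e3 e4
        calc (min 1 (σ ^ α / ε ^ β))⁻¹ ≤ 1 + ε ^ β * (σ ^ α)⁻¹ := key2
          _ ≤ 1 + ε ^ β * (s ^ (-θ) * σ ^ (θ - α)) :=
              by have := mul_le_mul_of_nonneg_left key3 hεβ.le; linarith
          _ = h σ := by rw [hhdef]; ring
      have step1 : (∫ σ in Set.Ioc s ε, (min 1 (σ ^ α / ε ^ β))⁻¹)
          ≤ ∫ σ in Set.Ioc s ε, h σ := by
        refine integral_mono_of_nonneg ?_ (hhint.mono_set (Set.Ioc_subset_Ioc_left hs0.le)) ?_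
        · refine (ae_restrict_mem measurableSet_Ioc).mono fun σ hσ => ?_
          have hσ0 : 0 < σ := lt_trans hs0 hσ.1
          have : 0 ≤ min 1 (σ ^ α / ε ^ β) := le_min zero_le_one (by positivity)
          positivity
        · exact (ae_restrict_mem measurableSet_Ioc).mono hbound
      have step2 : (∫ σ in Set.Ioc s ε, h σ) ≤ ∫ σ in Set.Ioc (0:ℝ) ε, h σ := by
        refine setIntegral_mono_set hhint ?_ (HasSubset.Subset.eventuallyLE
          (Set.Ioc_subset_Ioc_left hs0.le))
        exact (ae_restrict_mem measurableSet_Ioc).mono hhnn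
      have step3 : (∫ σ in Set.Ioc (0:ℝ) ε, h σ) = ε + B * s ^ (-θ) := by
        rw [hhdef]
        rw [integral_add ((integrableOn_const_iff (C := (1:ℝ)) (s := Set.Ioc (0:ℝ) ε) (by simp)).mpr (Or.inr (by simp [Real.volume_Ioc])))
          (hrint.const_mul _)]
        rw [integral_const_mul, hrval, setIntegral_const]
        simp [Real.volume_Ioc, hε.le, hBdef]
        ring
      linarith
    -- bound on the p-th power of the inner integral
    have hθpne : (0:ℝ) < 1 - θ * p := by linarith
    have innerpow : ∀ s ∈ Set.Ioc (0:ℝ) ε,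
        (∫ σ in Set.Ioc s ε, (min 1 (σ ^ α / ε ^ β))⁻¹) ^ p
          ≤ 2 ^ p * (ε ^ p + B ^ p * s ^ (-(θ * p))) := by
      intro s hs
      have h1 : (∫ σ in Set.Ioc s ε, (min 1 (σ ^ α / ε ^ β))⁻¹) ^ p
          ≤ (ε + B * s ^ (-θ)) ^ p :=
        Real.rpow_le_rpow (inner_nonneg s hs) (inner s hs) hp.le
      have hsθ : (0:ℝ) ≤ s ^ (-θ) := Real.rpow_nonneg hs.1.le _
      have h2 : (ε + B * s ^ (-θ)) ^ p ≤ 2 ^ p * (ε ^ p + (B * s ^ (-θ)) ^ p) :=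
        add_rpow_le_two_rpow _ _ _ hε.le (by positivity) hp.le
      have h3 : (B * s ^ (-θ)) ^ p = B ^ p * s ^ (-(θ * p)) := by
        rw [Real.mul_rpow hB hsθ, ← Real.rpow_mul hs.1.le, neg_mul]
      rw [h3] at h2
      linarith
    -- integrate the outer bound
    have houtint : IntegrableOn
        (fun s : ℝ => 2 ^ p * (ε ^ p + B ^ p * s ^ (-(θ * p)))) (Set.Ioc 0 ε) := by
      refine Integrable.const_mul ?_ _
      refine ((integrableOn_const_iff (by simp)).mpr (Or.inr (by simp [Real.volume_Ioc]))).add ?_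
      exact Integrable.const_mul ((intervalIntegrable_iff_integrableOn_Ioc_of_le hε.le).mp
        (intervalIntegral.intervalIntegrable_rpow' hexp2)) _
    have outer : (∫ s in Set.Ioc (0:ℝ) ε,
          (∫ σ in Set.Ioc s ε, (min 1 (σ ^ α / ε ^ β))⁻¹) ^ p)
        ≤ ∫ s in Set.Ioc (0:ℝ) ε, 2 ^ p * (ε ^ p + B ^ p * s ^ (-(θ * p))) := by
      refine integral_mono_of_nonneg ?_ houtint ?_
      · refine (ae_restrict_mem measurableSet_Ioc).mono fun s hs => ?_
        exact Real.rpow_nonneg (inner_nonneg s hs) p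
      · exact (ae_restrict_mem measurableSet_Ioc).mono innerpow
    have houtval : (∫ s in Set.Ioc (0:ℝ) ε, 2 ^ p * (ε ^ p + B ^ p * s ^ (-(θ * p))))
        = 2 ^ p * (ε ^ p * ε + B ^ p * (ε ^ (1 - θ * p) / (1 - θ * p))) := by
      rw [integral_const_mul]
      rw [integral_add ((integrableOn_const_iff (C := ε ^ p) (s := Set.Ioc (0:ℝ) ε) (by simp)).mpr (Or.inr (by simp [Real.volume_Ioc])))
        (Integrable.const_mul ((intervalIntegrable_iff_integrableOn_Ioc_of_le hε.le).mp
          (intervalIntegral.intervalIntegrable_rpow' hexp2)) _)]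
      rw [integral_const_mul, setIntegral_const]
      have : (∫ s in Set.Ioc (0:ℝ) ε, s ^ (-(θ * p))) = ε ^ (1 - θ * p) / (1 - θ * p) := by
        rw [ioc_integral_rpow hexp2 hε.le, show -(θ * p) + 1 = 1 - θ * p by ring]
      rw [this]
      simp only [Real.volume_Ioc, Real.volume_real_Ioc, sub_zero, max_eq_left hε.le, ENNReal.toReal_ofReal hε.le, smul_eq_mul]
      ring
    -- final algebra
    have hεne : ε ≠ 0 := hε.ne'
    have hBp : B ^ p = ε ^ ((β + c) * p) / c ^ p := by
      have hBval : B = ε ^ (β + c) / c := by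
        rw [hBdef, Real.rpow_add hε, mul_div_assoc]
      rw [hBval, Real.div_rpow (Real.rpow_nonneg hε.le _) hc.le,
        ← Real.rpow_mul hε.le]
    have hfin : (1/ε) * (2 ^ p * (ε ^ p * ε + B ^ p * (ε ^ (1 - θ * p) / (1 - θ * p))))
        = 2 ^ p * ε ^ p + K * ε ^ (p * (β + 1 - α)) := by
      have e2 : ε ^ ((β + c) * p) * ε ^ (1 - θ * p) = ε ^ (p * (β + 1 - α)) * ε := by
        rw [← Real.rpow_add hε, ← Real.rpow_add_one hεne (p * (β + 1 - α))]
        congr 1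
        rw [hcdef]; ring
      have e3 : B ^ p * (ε ^ (1 - θ * p) / (1 - θ * p))
          = (ε ^ (p * (β + 1 - α)) * ε) / (c ^ p * (1 - θ * p)) := by
        rw [hBp, div_mul_div_comm, e2]
      have hcp : c ^ p ≠ 0 := ne_of_gt (Real.rpow_pos_of_pos hc p)
      rw [e3, hKdef]
      field_simp
    calc (1/ε) * (∫ s in Set.Ioc (0:ℝ) ε,
          (∫ σ in Set.Ioc s ε, (min 1 (σ ^ α / ε ^ β))⁻¹) ^ p)
        ≤ (1/ε) * (∫ s in Set.Ioc (0:ℝ) ε, 2 ^ p * (ε ^ p + B ^ p * s ^ (-(θ * p)))) := by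
          apply mul_le_mul_of_nonneg_left outer (by positivity)
      _ = 2 ^ p * ε ^ p + K * ε ^ (p * (β + 1 - α)) := by rw [houtval, hfin]
  -- nonnegativity
  have nonneg : ∀ ε ∈ Set.Ioi (0:ℝ),
      0 ≤ (1/ε) * (∫ s in Set.Ioc (0:ℝ) ε,
          (∫ σ in Set.Ioc s ε, (min 1 (σ ^ α / ε ^ β))⁻¹) ^ p) := by
    intro ε hε
    rw [Set.mem_Ioi] at hε
    refine mul_nonneg (by positivity) (setIntegral_nonneg measurableSet_Ioc fun s hs => ?_)
    refine Real.rpow_nonneg (setIntegral_nonneg measurableSet_Ioc fun σ hσ => ?_) p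
    have hσ0 : 0 < σ := lt_trans hs.1 hσ.1
    have : 0 ≤ min 1 (σ ^ α / ε ^ β) := le_min zero_le_one (by positivity)
    positivity
  -- limit of the upper bound
  have l1 : Filter.Tendsto (fun ε : ℝ => ε ^ p) (nhdsWithin 0 (Set.Ioi 0)) (nhds 0) := by
    have := (Real.continuousAt_rpow_const 0 p (Or.inr hp.le)).tendsto
    rw [Real.zero_rpow hp.ne'] at this
    exact this.mono_left nhdsWithin_le_nhds
  have hq : 0 < p * (β + 1 - α) := mul_pos hp (by linarith)
  have l2 : Filter.Tendsto (fun ε : ℝ => ε ^ (p * (β + 1 - α)))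
      (nhdsWithin 0 (Set.Ioi 0)) (nhds 0) := by
    have := (Real.continuousAt_rpow_const 0 _ (Or.inr hq.le)).tendsto
    rw [Real.zero_rpow hq.ne'] at this
    exact this.mono_left nhdsWithin_le_nhds
  have lup : Filter.Tendsto (fun ε : ℝ => 2 ^ p * ε ^ p + K * ε ^ (p * (β + 1 - α)))
      (nhdsWithin 0 (Set.Ioi 0)) (nhds 0) := by
    have := (l1.const_mul ((2:ℝ) ^ p)).add (l2.const_mul K)
    simpa using this
  refine tendsto_of_tendsto_of_tendsto_of_le_of_le' tendsto_const_nhds lup ?_ ?_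
  · exact Filter.eventually_of_mem self_mem_nhdsWithin nonneg
  · exact Filter.eventually_of_mem self_mem_nhdsWithin key
end
end

section
/- Let N ≥ 2 and let Ω = 𝕋^{N−1} × (0,1) with 𝕋^{N−1} = ℝ^{N−1}/ℤ^{N−1} the flat torus with its Haar (Lebesgue) measure; write x = (x′, x_N) and d(x) = min(x_N, 1−x_N). Let φ : (0,1/2) → (0,∞) satisfy sup_{ε∈(0,1/2)} ε·φ(ε) < ∞, and for ε ∈ (0,1/2) set b_ε(x) = 1 if d(x) ≥ ε and b_ε(x) = φ(ε) if d(x) < ε. Given u₀ ∈ L²(Ω) and w⁰, w¹ ∈ L²(𝕋^{N−1}), define u₀^ε(x′, x_N) = u₀(x′, x_N) for ε ≤ x_N ≤ 1−ε, u₀^ε(x′, x_N) = w⁰(x′) for 0 < x_N < ε, and u₀^ε(x′, x_N) = w¹(x′) for 1−ε < x_N < 1. Then: (i) sup_{ε∈(0,1/2)} ∫_Ω b_ε(x) (u₀^ε(x))² dx < ∞; (ii) u₀^ε → u₀ in L²(Ω) as ε → 0⁺; (iii) for every ε ∈ (0,1/2), (1/ε)∫₀^ε u₀^ε(x′, s)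 ds = w⁰(x′) and (1/ε)∫_{1−ε}^{1} u₀^ε(x′, s) ds = w¹(x′) for almost every x′ ∈ 𝕋^{N−1}. -/
open MeasureTheory
open scoped ENNReal
noncomputable section

/-- The boundary-layer weight `b_ε`: equal to `1` on `Ω_ε = {d(x) ≥ ε}` and to
`φ(ε)` on the boundary layer `{d(x) < ε}`, where `d(x) = min(x_N, 1 − x_N)`. -/
def bWt (φε ε : ℝ) {n : ℕ} (p : (Fin n → ℝ) × ℝ) : ℝ :=
  if ε ≤ min p.2 (1 - p.2) then 1 else φε

/-- The well prepared approximating initial data: `u₀` in the interior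
`ε ≤ x_N ≤ 1−ε`, `w⁰(x′)` in the bottom layer `x_N < ε` and `w¹(x′)` in the top layer
`x_N > 1−ε`. -/
def prepared {n : ℕ} (u₀ : (Fin n → ℝ) × ℝ → ℝ) (w0 w1 : (Fin n → ℝ) → ℝ)
    (ε : ℝ) (p : (Fin n → ℝ) × ℝ) : ℝ :=
  if p.2 < ε then w0 p.1 else if p.2 ≤ 1 - ε then u₀ p else w1 p.1

lemma unitBox_meas (n : ℕ) : MeasurableSet (unitBox n) :=
  MeasurableSet.univ_pi fun _ => measurableSet_Ico

lemma cyl_meas (n : ℕ) : MeasurableSet (cyl n) :=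
  (unitBox_meas n).prod measurableSet_Ioo

lemma slice_lintegral (n : ℕ) (f : (Fin n → ℝ) → ℝ≥0∞) (hf : Measurable f)
    (t : Set ℝ) :
    ∫⁻ p in (unitBox n) ×ˢ t, f p.1 = volume t * ∫⁻ x in unitBox n, f x := by
  rw [Measure.volume_eq_prod, ← Measure.prod_restrict]
  rw [lintegral_prod (fun p => f p.1) ((hf.comp measurable_fst).aemeasurable)]
  simp only [lintegral_const, Measure.restrict_apply_univ]
  rw [lintegral_mul_const _ hf, mul_comm]

lemma prepared_meas {n : ℕ} (u₀ : (Fin n → ℝ) × ℝ → ℝ) (w0 w1 : (Fin n → ℝ) → ℝ)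
    (hu₀ : Measurable u₀) (hw0 : Measurable w0) (hw1 : Measurable w1) (ε : ℝ) :
    Measurable (prepared u₀ w0 w1 ε) := by
  unfold prepared
  exact Measurable.ite (measurableSet_lt measurable_snd measurable_const)
    (hw0.comp measurable_fst)
    (Measurable.ite (measurableSet_le measurable_snd measurable_const) hu₀
      (hw1.comp measurable_fst))

lemma lintegral_cyl_indicator_bot (n : ℕ) (ε : ℝ) (hε1 : ε ≤ 1)
    (g : (Fin n → ℝ) → ℝ≥0∞) (hg : Measurable g) :
    ∫⁻ p in cyl n, Set.indicator {p : (Fin n → ℝ) × ℝ | p.2 < ε} (fun p => g p.1) p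
      = ENNReal.ofReal ε * ∫⁻ x in unitBox n, g x := by
  have hS : MeasurableSet {p : (Fin n → ℝ) × ℝ | p.2 < ε} :=
    measurableSet_lt measurable_snd measurable_const
  rw [lintegral_indicator hS, Measure.restrict_restrict hS]
  have hset : {p : (Fin n → ℝ) × ℝ | p.2 < ε} ∩ cyl n = (unitBox n) ×ˢ Set.Ioo 0 ε := by
    ext ⟨x, s⟩
    simp only [cyl, Set.mem_inter_iff, Set.mem_setOf_eq, Set.mem_prod, Set.mem_Ioo]
    constructor
    · rintro ⟨h1, h2, h3, _⟩; exact ⟨h2, h3, h1⟩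
    · rintro ⟨h1, h2, h3⟩; exact ⟨h3, h1, h2, lt_of_lt_of_le h3 hε1⟩
  rw [hset, slice_lintegral n g hg, Real.volume_Ioo, sub_zero]

lemma lintegral_cyl_indicator_top (n : ℕ) (ε : ℝ) (hε0 : 0 ≤ ε) (hε1 : ε ≤ 1)
    (g : (Fin n → ℝ) → ℝ≥0∞) (hg : Measurable g) :
    ∫⁻ p in cyl n, Set.indicator {p : (Fin n → ℝ) × ℝ | 1 - ε < p.2} (fun p => g p.1) p
      = ENNReal.ofReal ε * ∫⁻ x in unitBox n, g x := by
  have hS : MeasurableSet {p : (Fin n → ℝ) × ℝ | 1 - ε < p.2} :=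
    measurableSet_lt measurable_const measurable_snd
  rw [lintegral_indicator hS, Measure.restrict_restrict hS]
  have hset : {p : (Fin n → ℝ) × ℝ | 1 - ε < p.2} ∩ cyl n
      = (unitBox n) ×ˢ Set.Ioo (1 - ε) 1 := by
    ext ⟨x, s⟩
    simp only [cyl, Set.mem_inter_iff, Set.mem_setOf_eq, Set.mem_prod, Set.mem_Ioo]
    constructor
    · rintro ⟨h1, h2, _, h4⟩; exact ⟨h2, h1, h4⟩
    · rintro ⟨h1, h2, h3⟩; exact ⟨h2, h1, by linarith, h3⟩
  rw [hset, slice_lintegral n g hg, Real.volume_Ioo]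
  norm_num

/-- Every pair `(u₀, w₀) ∈ L²(Ω) × L²(∂Ω)` (with `w₀ = (w⁰, w¹)` on the two boundary
components) admits a well prepared sequence of approximating initial data: the family
`u₀^ε` has uniformly bounded `b_ε`-weighted `L²` norms, converges to `u₀` in `L²(Ω)`, and
its boundary-layer averages are exactly `w⁰` and `w¹`. -/
theorem well_prepared_data_exists
    (n : ℕ) (hn : 1 ≤ n)
    (φ : ℝ → ℝ) (hφ_pos : ∀ ε ∈ Set.Ioo (0:ℝ) (1/2), 0 < φ ε)
    (hφ_bdd : ∃ C : ℝ, ∀ ε ∈ Set.Ioo (0:ℝ) (1/2), ε * φ ε ≤ C)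
    (u₀ : (Fin n → ℝ) × ℝ → ℝ) (hu₀_meas : Measurable u₀)
    (hu₀_L2 : ∫⁻ p in cyl n, ENNReal.ofReal ((u₀ p) ^ 2) < ⊤)
    (w0 w1 : (Fin n → ℝ) → ℝ) (hw0_meas : Measurable w0) (hw1_meas : Measurable w1)
    (hw0_L2 : ∫⁻ x' in unitBox n, ENNReal.ofReal ((w0 x') ^ 2) < ⊤)
    (hw1_L2 : ∫⁻ x' in unitBox n, ENNReal.ofReal ((w1 x') ^ 2) < ⊤) :
    (∃ C : ℝ, ∀ ε ∈ Set.Ioo (0:ℝ) (1/2),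
        ∫⁻ p in cyl n,
            ENNReal.ofReal (bWt (φ ε) ε p * (prepared u₀ w0 w1 ε p) ^ 2)
          ≤ ENNReal.ofReal C) ∧
    Filter.Tendsto
      (fun ε => ∫⁻ p in cyl n, ENNReal.ofReal ((prepared u₀ w0 w1 ε p - u₀ p) ^ 2))
      (nhdsWithin 0 (Set.Ioo 0 (1/2))) (nhds 0) ∧
    ∀ ε ∈ Set.Ioo (0:ℝ) (1/2),
      (∀ᵐ x' ∂(volume.restrict (unitBox n)),
        (1/ε) * ∫ s in Set.Ioc (0:ℝ) ε, prepared u₀ w0 w1 ε (x', s) = w0 x') ∧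
      (∀ᵐ x' ∂(volume.restrict (unitBox n)),
        (1/ε) * ∫ s in Set.Ioc (1 - ε) 1, prepared u₀ w0 w1 ε (x', s) = w1 x') := by
  obtain ⟨C₀, hC₀⟩ := hφ_bdd
  set C₁ := max C₀ 0 with hC₁def
  set Iu := ∫⁻ p in cyl n, ENNReal.ofReal ((u₀ p) ^ 2) with hIu
  set Iw0 := ∫⁻ x' in unitBox n, ENNReal.ofReal ((w0 x') ^ 2) with hIw0
  set Iw1 := ∫⁻ x' in unitBox n, ENNReal.ofReal ((w1 x') ^ 2) with hIw1
  have hmu : Measurable fun p : (Fin n → ℝ) × ℝ => ENNReal.ofReal ((u₀ p) ^ 2) :=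
    (hu₀_meas.pow_const 2).ennreal_ofReal
  refine ⟨?_, ?_, ?_⟩
  · -- Part (i): uniform bound
    set M : ℝ≥0∞ := Iu + ENNReal.ofReal C₁ * Iw0 + ENNReal.ofReal C₁ * Iw1 with hMdef
    have hM : M ≠ ⊤ := by
      simp only [hMdef]
      exact ENNReal.add_ne_top.2 ⟨ENNReal.add_ne_top.2 ⟨hu₀_L2.ne,
        ENNReal.mul_ne_top ENNReal.ofReal_ne_top hw0_L2.ne⟩,
        ENNReal.mul_ne_top ENNReal.ofReal_ne_top hw1_L2.ne⟩
    refine ⟨M.toReal, fun ε hε => ?_⟩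
    obtain ⟨hε0, hε2⟩ := hε
    rw [ENNReal.ofReal_toReal hM]
    have hφε : 0 ≤ φ ε := (hφ_pos ε ⟨hε0, hε2⟩).le
    have hε1 : ε ≤ 1 := by linarith
    set f2 : (Fin n → ℝ) × ℝ → ℝ≥0∞ :=
      Set.indicator {p : (Fin n → ℝ) × ℝ | p.2 < ε}
        (fun p => ENNReal.ofReal (φ ε * (w0 p.1) ^ 2)) with hf2
    set f3 : (Fin n → ℝ) × ℝ → ℝ≥0∞ :=
      Set.indicator {p : (Fin n → ℝ) × ℝ | 1 - ε < p.2}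
        (fun p => ENNReal.ofReal (φ ε * (w1 p.1) ^ 2)) with hf3
    have hf2m : Measurable f2 :=
      Measurable.indicator
        (((hw0_meas.comp measurable_fst).pow_const 2).const_mul (φ ε)).ennreal_ofReal
        (measurableSet_lt measurable_snd measurable_const)
    have hf3m : Measurable f3 :=
      Measurable.indicator
        (((hw1_meas.comp measurable_fst).pow_const 2).const_mul (φ ε)).ennreal_ofReal
        (measurableSet_lt measurable_const measurable_snd)
    have hpt : ∀ p ∈ cyl n,
        ENNReal.ofReal (bWt (φ ε) ε p * (prepared u₀ w0 w1 ε p) ^ 2)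
          ≤ ENNReal.ofReal ((u₀ p) ^ 2) + f2 p + f3 p := by
      intro p hp
      obtain ⟨hp0, hp1⟩ := hp.2
      by_cases h1 : p.2 < ε
      · have hb : ¬ ε ≤ min p.2 (1 - p.2) := by
          push_neg; exact lt_of_le_of_lt (min_le_left _ _) h1
        have : f2 p = ENNReal.ofReal (φ ε * (w0 p.1) ^ 2) :=
          Set.indicator_of_mem (s := {p : (Fin n → ℝ) × ℝ | p.2 < ε}) h1 _
        rw [bWt, if_neg hb, prepared, if_pos h1, this]
        exact le_trans (self_le_add_left _ _) (self_le_add_right _ _)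
      · by_cases h2 : p.2 ≤ 1 - ε
        · have hb : ε ≤ min p.2 (1 - p.2) := le_min (not_lt.1 h1) (by linarith)
          rw [bWt, if_pos hb, prepared, if_neg h1, if_pos h2, one_mul]
          exact le_trans (self_le_add_right _ _) (self_le_add_right _ _)
        · push_neg at h2
          have hb : ¬ ε ≤ min p.2 (1 - p.2) := by
            push_neg; exact lt_of_le_of_lt (min_le_right _ _) (by linarith)
          have : f3 p = ENNReal.ofReal (φ ε * (w1 p.1) ^ 2) :=
            Set.indicator_of_mem (s := {p : (Fin n → ℝ) × ℝ | 1 - ε < p.2}) h2 _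
          rw [bWt, if_neg hb, prepared, if_neg h1, if_neg (not_le.2 h2), this]
          exact self_le_add_left _ _
    calc ∫⁻ p in cyl n, ENNReal.ofReal (bWt (φ ε) ε p * (prepared u₀ w0 w1 ε p) ^ 2)
        ≤ ∫⁻ p in cyl n, (ENNReal.ofReal ((u₀ p) ^ 2) + f2 p + f3 p) :=
          setLIntegral_mono ((hmu.add hf2m).add hf3m) hpt
      _ = Iu + (∫⁻ p in cyl n, f2 p) + (∫⁻ p in cyl n, f3 p) := by
          rw [lintegral_add_right _ hf3m, lintegral_add_right _ hf2m]
      _ ≤ M := by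
          have hw0c : Measurable fun x : Fin n → ℝ => ENNReal.ofReal (φ ε * (w0 x) ^ 2) :=
            ((hw0_meas.pow_const 2).const_mul (φ ε)).ennreal_ofReal
          have hw1c : Measurable fun x : Fin n → ℝ => ENNReal.ofReal (φ ε * (w1 x) ^ 2) :=
            ((hw1_meas.pow_const 2).const_mul (φ ε)).ennreal_ofReal
          have h2 : ∫⁻ p in cyl n, f2 p = ENNReal.ofReal (ε * φ ε) * Iw0 := by
            rw [hf2, lintegral_cyl_indicator_bot n ε hε1 _ hw0c]
            simp_rw [ENNReal.ofReal_mul hφε]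
            rw [lintegral_const_mul _ (hw0_meas.pow_const 2).ennreal_ofReal,
              ← mul_assoc, ← ENNReal.ofReal_mul hε0.le]
          have h3 : ∫⁻ p in cyl n, f3 p = ENNReal.ofReal (ε * φ ε) * Iw1 := by
            rw [hf3, lintegral_cyl_indicator_top n ε hε0.le hε1 _ hw1c]
            simp_rw [ENNReal.ofReal_mul hφε]
            rw [lintegral_const_mul _ (hw1_meas.pow_const 2).ennreal_ofReal,
              ← mul_assoc, ← ENNReal.ofReal_mul hε0.le]
          have hle : ENNReal.ofReal (ε * φ ε) ≤ ENNReal.ofReal C₁ :=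
            ENNReal.ofReal_le_ofReal (le_trans (hC₀ ε ⟨hε0, hε2⟩) (le_max_left _ _))
          rw [hMdef]
          refine add_le_add (add_le_add le_rfl ?_) ?_
          · exact h2.le.trans (mul_le_mul_left hle _)
          · exact h3.le.trans (mul_le_mul_left hle _)
  · -- Part (ii): L² convergence
    set G : (Fin n → ℝ) × ℝ → ℝ≥0∞ :=
      fun p => ENNReal.ofReal (2 * (w0 p.1) ^ 2 + 2 * (w1 p.1) ^ 2 + 4 * (u₀ p) ^ 2)
      with hGdef
    have hGfin : ∫⁻ p in cyl n, G p ≠ ⊤ := by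
      have hsplit : ∀ p : (Fin n → ℝ) × ℝ, G p =
          ENNReal.ofReal (2 * (w0 p.1) ^ 2) + ENNReal.ofReal (2 * (w1 p.1) ^ 2)
            + ENNReal.ofReal (4 * (u₀ p) ^ 2) := by
        intro p
        show ENNReal.ofReal (2 * (w0 p.1) ^ 2 + 2 * (w1 p.1) ^ 2 + 4 * (u₀ p) ^ 2) = _
        rw [ENNReal.ofReal_add (by positivity) (by positivity),
          ENNReal.ofReal_add (by positivity) (by positivity)]
      simp_rw [hsplit]
      have hm0 : Measurable fun x : Fin n → ℝ => ENNReal.ofReal (2 * (w0 x) ^ 2) :=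
        ((hw0_meas.pow_const 2).const_mul 2).ennreal_ofReal
      have hm1 : Measurable fun x : Fin n → ℝ => ENNReal.ofReal (2 * (w1 x) ^ 2) :=
        ((hw1_meas.pow_const 2).const_mul 2).ennreal_ofReal
      rw [lintegral_add_right _ ((hu₀_meas.pow_const 2).const_mul 4).ennreal_ofReal,
        lintegral_add_right _
          (show Measurable fun p : (Fin n → ℝ) × ℝ => ENNReal.ofReal (2 * (w1 p.1) ^ 2) from
            hm1.comp measurable_fst)]
      have e0 : ∫⁻ p in cyl n, ENNReal.ofReal (2 * (w0 p.1) ^ 2)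
          = volume (Set.Ioo (0:ℝ) 1) * ∫⁻ x in unitBox n, ENNReal.ofReal (2 * (w0 x) ^ 2) :=
        slice_lintegral n _ hm0 _
      have e1 : ∫⁻ p in cyl n, ENNReal.ofReal (2 * (w1 p.1) ^ 2)
          = volume (Set.Ioo (0:ℝ) 1) * ∫⁻ x in unitBox n, ENNReal.ofReal (2 * (w1 x) ^ 2) :=
        slice_lintegral n _ hm1 _
      have fin0 : ∫⁻ x in unitBox n, ENNReal.ofReal (2 * (w0 x) ^ 2) ≠ ⊤ := by
        simp_rw [fun x : Fin n → ℝ => ENNReal.ofReal_mul (by norm_num : (0:ℝ) ≤ 2)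
          (q := (w0 x) ^ 2)]
        rw [lintegral_const_mul _ (hw0_meas.pow_const 2).ennreal_ofReal]
        exact ENNReal.mul_ne_top (by simp) hw0_L2.ne
      have fin1 : ∫⁻ x in unitBox n, ENNReal.ofReal (2 * (w1 x) ^ 2) ≠ ⊤ := by
        simp_rw [fun x : Fin n → ℝ => ENNReal.ofReal_mul (by norm_num : (0:ℝ) ≤ 2)
          (q := (w1 x) ^ 2)]
        rw [lintegral_const_mul _ (hw1_meas.pow_const 2).ennreal_ofReal]
        exact ENNReal.mul_ne_top (by simp) hw1_L2.ne
      have finu : ∫⁻ p in cyl n, ENNReal.ofReal (4 * (u₀ p) ^ 2) ≠ ⊤ := by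
        simp_rw [fun p : (Fin n → ℝ) × ℝ => ENNReal.ofReal_mul (by norm_num : (0:ℝ) ≤ 4)
          (q := (u₀ p) ^ 2)]
        rw [lintegral_const_mul _ hmu]
        exact ENNReal.mul_ne_top (by simp) hu₀_L2.ne
      refine ENNReal.add_ne_top.2 ⟨ENNReal.add_ne_top.2 ⟨?_, ?_⟩, finu⟩
      · rw [e0]; exact ENNReal.mul_ne_top (by simp [Real.volume_Ioo]) fin0
      · rw [e1]; exact ENNReal.mul_ne_top (by simp [Real.volume_Ioo]) fin1
    have hconv := tendsto_lintegral_filter_of_dominated_convergence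
      (μ := volume.restrict (cyl n))
      (l := nhdsWithin (0:ℝ) (Set.Ioo 0 (1/2)))
      (F := fun ε p => ENNReal.ofReal ((prepared u₀ w0 w1 ε p - u₀ p) ^ 2))
      (f := fun _ => 0) G
      (Filter.Eventually.of_forall fun ε =>
        (((prepared_meas u₀ w0 w1 hu₀_meas hw0_meas hw1_meas ε).sub
          hu₀_meas).pow_const 2).ennreal_ofReal)
      (Filter.Eventually.of_forall fun ε => Filter.Eventually.of_forall fun p => by
        apply ENNReal.ofReal_le_ofReal
        have h0 : (0:ℝ) ≤ (w0 p.1)^2 := sq_nonneg _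
        have h1 : (0:ℝ) ≤ (w1 p.1)^2 := sq_nonneg _
        have h2 : (0:ℝ) ≤ (u₀ p)^2 := sq_nonneg _
        unfold prepared
        split_ifs with ha hb
        · nlinarith [sq_nonneg (w0 p.1 + u₀ p)]
        · nlinarith
        · nlinarith [sq_nonneg (w1 p.1 + u₀ p)])
      hGfin
      ?_
    · simpa using hconv
    · rw [ae_restrict_iff' (cyl_meas n)]
      refine Filter.Eventually.of_forall fun p hp => ?_
      obtain ⟨hp0, hp1⟩ := hp.2
      have hm : (0:ℝ) < min p.2 (1 - p.2) := lt_min hp0 (by linarith)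
      have hev : ∀ᶠ ε in nhdsWithin (0:ℝ) (Set.Ioo 0 (1/2)),
          ENNReal.ofReal ((prepared u₀ w0 w1 ε p - u₀ p) ^ 2) = 0 := by
        refine Filter.eventually_of_mem
          (mem_nhdsWithin_of_mem_nhds (Iio_mem_nhds hm)) fun ε hε => ?_
        have h1 : ¬ p.2 < ε := not_lt.2 (le_of_lt (lt_of_lt_of_le (Set.mem_Iio.1 hε) (min_le_left _ _)))
        have h2 : p.2 ≤ 1 - ε := by
          have := lt_of_lt_of_le (Set.mem_Iio.1 hε) (min_le_right _ _); linarith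
        rw [prepared, if_neg h1, if_pos h2]
        simp
      exact (Filter.tendsto_congr' hev).2 tendsto_const_nhds
  · -- Part (iii): exact boundary averages
    intro ε hε
    obtain ⟨hε0, hε2⟩ := hε
    constructor
    · refine Filter.Eventually.of_forall fun x' => ?_
      have key : ∫ s in Set.Ioc (0:ℝ) ε, prepared u₀ w0 w1 ε (x', s) = ε * w0 x' := by
        rw [integral_Ioc_eq_integral_Ioo]
        rw [setIntegral_congr_fun measurableSet_Ioo
          (g := fun _ => w0 x') (fun s hs => by simp [prepared, hs.2])]
        rw [setIntegral_const]
        simp [Real.volume_Ioo, hε0.le, smul_eq_mul]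
      rw [key]; field_simp
    · refine Filter.Eventually.of_forall fun x' => ?_
      have key : ∫ s in Set.Ioc (1 - ε) 1, prepared u₀ w0 w1 ε (x', s) = ε * w1 x' := by
        rw [setIntegral_congr_fun measurableSet_Ioc
          (g := fun _ => w1 x') (fun s hs => ?_)]
        · rw [setIntegral_const]
          rw [Measure.real, Real.volume_Ioc]
          rw [ENNReal.toReal_ofReal (by linarith)]
          rw [smul_eq_mul]
          ring
        · have h1 : ¬ s < ε := by
            have := hs.1; push_neg; linarith
          have h2 : ¬ s ≤ 1 - ε := not_le.2 hs.1
          simp [prepared, h1, h2]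
      rw [key]; field_simp
end
end
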